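/- arXiv:1203.0407 — 3 statements merged into one kernel-verified Lean document; each statement's English description precedes it below -/
import Mathlib

section
/- Let P be a finite collection of cells. Then the degree-2 graded components of the inner 2-minor ideal I_P and of the lattice ideal L_P = ker ψ coincide: (I_P)₂ = (L_P)₂. -/
open scoped BigOperators

abbrev Cell : Type := ℕ × ℕ

/-- The four corners of the unit cell with lower left corner `a`. -/
def cellVerts (a : Cell) : Finset (ℕ × ℕ) :=
  {a, (a.1 + 1, a.2), (a.1, a.2 + 1), (a.1 + 1, a.2 + 1)}

/-- The vertex set of a collection of cells. -/
def verts (P : Finset Cell) : Finset (ℕ × ℕ) := P.biUnion cellVerts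

/-- Row convexity of a collection of cells. -/
def RowConvex (P : Finset Cell) : Prop :=
  ∀ a ∈ P, ∀ b ∈ P, a.2 = b.2 → ∀ r : ℕ, a.1 ≤ r → r ≤ b.1 → (r, a.2) ∈ P

/-- Column convexity of a collection of cells. -/
def ColConvex (P : Finset Cell) : Prop :=
  ∀ a ∈ P, ∀ b ∈ P, a.1 = b.1 → ∀ s : ℕ, a.2 ≤ s → s ≤ b.2 → (a.1, s) ∈ P

/-- A collection of cells is convex if it is row and column convex. -/
def IsConvexColl (P : Finset Cell) : Prop := RowConvex P ∧ ColConvex P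

/-- Weak connectedness: any two cells are joined by a sequence of cells of `P`
in which consecutive cells share at least one vertex. -/
def WeaklyConnected (P : Finset Cell) : Prop :=
  ∀ a ∈ P, ∀ b ∈ P,
    Relation.ReflTransGen
      (fun c d => c ∈ P ∧ d ∈ P ∧ (cellVerts c ∩ cellVerts d).Nonempty) a b

/-- Two cells share an edge. -/
def edgeAdj (a b : Cell) : Prop :=
  (a.1 = b.1 ∧ (a.2 + 1 = b.2 ∨ b.2 + 1 = a.2)) ∨
  (a.2 = b.2 ∧ (a.1 + 1 = b.1 ∨ b.1 + 1 = a.1))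

/-- Connectedness: any two cells are joined by an edge-sharing path of cells of `P`. -/
def ConnectedColl (P : Finset Cell) : Prop :=
  ∀ a ∈ P, ∀ b ∈ P,
    Relation.ReflTransGen (fun c d => c ∈ P ∧ d ∈ P ∧ edgeAdj c d) a b

/-- `Q` is a connected component of `P`. -/
def IsComponent (P Q : Finset Cell) : Prop :=
  Q ⊆ P ∧ Q.Nonempty ∧ ConnectedColl Q ∧
    ∀ R : Finset Cell, Q ⊆ R → R ⊆ P → ConnectedColl R → R = Q

/-- The cell `c` belongs to the interval `[a,b]`. -/
def cellInBox (a b : ℕ × ℕ) (c : Cell) : Prop :=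
  a.1 ≤ c.1 ∧ c.1 + 1 ≤ b.1 ∧ a.2 ≤ c.2 ∧ c.2 + 1 ≤ b.2

/-- `c` is a border cell of the interval `[a,b]`. -/
def borderCell (a b : ℕ × ℕ) (c : Cell) : Prop :=
  cellInBox a b c ∧ (c.1 = a.1 ∨ c.1 + 1 = b.1 ∨ c.2 = a.2 ∨ c.2 + 1 = b.2)

/-- A collection of cells is simple (has no holes). -/
def SimpleColl (P : Finset Cell) : Prop :=
  ∀ a b : ℕ × ℕ, a.1 < b.1 → a.2 < b.2 →
    (∀ v ∈ verts P, a.1 < v.1 ∧ v.1 < b.1 ∧ a.2 < v.2 ∧ v.2 < b.2) →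
    ∀ c : Cell, cellInBox a b c → c ∉ P →
      ∃ d : Cell, borderCell a b d ∧
        Relation.ReflTransGen
          (fun u v => cellInBox a b u ∧ cellInBox a b v ∧ u ∉ P ∧ v ∉ P ∧ edgeAdj u v) c d

/-- `[a,b]` is an inner interval of `P`: it is proper and all of its cells belong to `P`. -/
def InnerInterval (P : Finset Cell) (a b : ℕ × ℕ) : Prop :=
  a.1 < b.1 ∧ a.2 < b.2 ∧
    ∀ r s : ℕ, a.1 ≤ r → r < b.1 → a.2 ≤ s → s < b.2 → (r, s) ∈ P

/-- The set of inner 2-minors of `P`. -/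
def innerMinors (K : Type*) [Field K] (P : Finset Cell) :
    Set (MvPolynomial {v : ℕ × ℕ // v ∈ verts P} K) :=
  { f | ∃ a b c d : {v : ℕ × ℕ // v ∈ verts P},
      InnerInterval P a.1 b.1 ∧ c.1 = (b.1.1, a.1.2) ∧ d.1 = (a.1.1, b.1.2) ∧
      f = MvPolynomial.X a * MvPolynomial.X b - MvPolynomial.X c * MvPolynomial.X d }

/-- The ideal of inner 2-minors of `P`. -/
noncomputable def innerIdeal (K : Type*) [Field K] (P : Finset Cell) :
    Ideal (MvPolynomial {v : ℕ × ℕ // v ∈ verts P} K) :=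
  Ideal.span (innerMinors K P)

/-- A vertex of `P` is free if it is not the lower left corner of any cell of `P`. -/
def freeVert (P : Finset Cell) (v : ℕ × ℕ) : Prop := v ∈ verts P ∧ v ∉ P

/-- The Laurent polynomial ring in the variables `y_c`, `c` a free vertex of `P`. -/
abbrev LaurentRing (K : Type*) [Field K] (P : Finset Cell) : Type _ :=
  AddMonoidAlgebra K ({v : ℕ × ℕ // freeVert P v} →₀ ℤ)

/-- `ψ` is the natural map `S → T`: it sends `x_a` to `y_a` for free vertices `a`, and
satisfies `ψ(x_a) ψ(x_d) = ψ(x_b) ψ(x_c)` whenever `a` is the lower left corner of a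
cell of `P` with remaining vertices `b, c, d` (equivalently `ψ(x_a)=ψ(x_b)ψ(x_c)ψ(x_d)⁻¹`).
These two conditions determine `ψ` uniquely. -/
def psiSpec (K : Type*) [Field K] (P : Finset Cell)
    (ψ : MvPolynomial {v : ℕ × ℕ // v ∈ verts P} K →ₐ[K] LaurentRing K P) : Prop :=
  (∀ v : {v : ℕ × ℕ // v ∈ verts P}, ∀ h : freeVert P v.1,
      ψ (MvPolynomial.X v) = AddMonoidAlgebra.of' K _ (Finsupp.single ⟨v.1, h⟩ 1)) ∧
  (∀ a b c d : {v : ℕ × ℕ // v ∈ verts P}, a.1 ∈ P →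
      b.1 = (a.1.1 + 1, a.1.2) → c.1 = (a.1.1, a.1.2 + 1) → d.1 = (a.1.1 + 1, a.1.2 + 1) →
      ψ (MvPolynomial.X a) * ψ (MvPolynomial.X d) =
        ψ (MvPolynomial.X b) * ψ (MvPolynomial.X c))


namespace P13
open Finsupp

/-- The relation vector attached to a cell. -/
noncomputable def Rel (p : Cell) : (ℕ × ℕ) →₀ ℤ :=
  Finsupp.single p 1 + Finsupp.single (p.1 + 1, p.2 + 1) 1
    - Finsupp.single (p.1 + 1, p.2) 1 - Finsupp.single (p.1, p.2 + 1) 1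

/-- The lattice generated by the cell relations of `P`. -/
noncomputable def lat (P : Finset Cell) : Submodule ℤ ((ℕ × ℕ) →₀ ℤ) :=
  Submodule.span ℤ (Rel '' (P : Set Cell))

lemma Rel_apply (q : Cell) (w : ℕ × ℕ) :
    Rel q w = (if q = w then (1:ℤ) else 0) + (if (q.1+1, q.2+1) = w then 1 else 0)
      - (if (q.1+1, q.2) = w then 1 else 0) - (if (q.1, q.2+1) = w then 1 else 0) := by
  simp [Rel, Finsupp.single_apply, Finsupp.sub_apply, Finsupp.add_apply]

lemma phi_lat {A : Type*} [AddCommGroup A] [Module ℤ A] (g : ℕ × ℕ → A) {P : Finset Cell}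
    (hg : ∀ p ∈ P, Finsupp.linearCombination ℤ g (Rel p) = 0)
    {x : (ℕ × ℕ) →₀ ℤ} (hx : x ∈ lat P) : Finsupp.linearCombination ℤ g x = 0 := by
  have h : lat P ≤ LinearMap.ker (Finsupp.linearCombination ℤ g) := by
    rw [lat, Submodule.span_le]
    rintro _ ⟨p, hp, rfl⟩
    exact hg p hp
  exact h hx

lemma lc_Rel {A : Type*} [AddCommGroup A] [Module ℤ A] (g : ℕ × ℕ → A) (p : Cell) :
    Finsupp.linearCombination ℤ g (Rel p)
      = g p + g (p.1+1, p.2+1) - g (p.1+1, p.2) - g (p.1, p.2+1) := by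
  simp [Rel, map_add, map_sub, Finsupp.linearCombination_single]
  erw [one_smul, one_smul, one_smul, one_smul]

/-- Telescoping sums. -/
lemma sum_telescope {A : Type*} [AddCommGroup A] (g : ℕ → A) {a b : ℕ} (h : a ≤ b) :
    ∑ j ∈ Finset.Ico a b, (g j - g (j + 1)) = g a - g b := by
  induction b, h using Nat.le_induction with
  | base => simp
  | succ b hb ih => rw [Finset.sum_Ico_succ_top (by omega), ih]; abel

/-- The indicator of the box `[a,b]`. -/
noncomputable def boxF (a b : ℕ × ℕ) : Cell →₀ ℤ :=
  ∑ q ∈ (Finset.Ico a.1 b.1) ×ˢ (Finset.Ico a.2 b.2), Finsupp.single q 1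

lemma boxF_apply (a b : ℕ × ℕ) (p : Cell) :
    boxF a b p = if p ∈ (Finset.Ico a.1 b.1) ×ˢ (Finset.Ico a.2 b.2) then (1:ℤ) else 0 := by
  rw [boxF, Finsupp.finset_sum_apply]
  rw [Finset.sum_congr rfl (fun q _ => Finsupp.single_apply)]
  exact Finset.sum_ite_eq' _ _ _

lemma T_boxF (a b : ℕ × ℕ) (h1 : a.1 ≤ b.1) (h2 : a.2 ≤ b.2) :
    Finsupp.linearCombination ℤ Rel (boxF a b)
      = Finsupp.single a 1 + Finsupp.single b 1
        - Finsupp.single (b.1, a.2) 1 - Finsupp.single (a.1, b.2) 1 := by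
  rw [boxF, map_sum, Finset.sum_congr rfl
      (fun q _ => by rw [Finsupp.linearCombination_single, one_smul]), Finset.sum_product]
  have hrow : ∀ i, ∑ j ∈ Finset.Ico a.2 b.2, Rel (i, j)
      = (Finsupp.single ((i:ℕ), a.2) 1 - Finsupp.single (i+1, a.2) 1)
        - (Finsupp.single (i, b.2) 1 - Finsupp.single (i+1, b.2) 1) := by
    intro i
    have := sum_telescope (fun j => (Finsupp.single ((i:ℕ), j) (1:ℤ) - Finsupp.single (i+1, j) 1)) h2
    rw [← this]
    refine Finset.sum_congr rfl fun j _ => ?_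
    rw [Rel]; abel
  rw [Finset.sum_congr rfl (fun i _ => hrow i)]
  have := sum_telescope (fun i => (Finsupp.single ((i:ℕ), a.2) (1:ℤ) - Finsupp.single (i, b.2) 1)) h1
  rw [show (∑ i ∈ Finset.Ico a.1 b.1,
      ((Finsupp.single ((i:ℕ), a.2) (1:ℤ) - Finsupp.single (i+1, a.2) 1)
        - (Finsupp.single (i, b.2) 1 - Finsupp.single (i+1, b.2) 1)))
    = ∑ i ∈ Finset.Ico a.1 b.1,
      ((fun i => (Finsupp.single ((i:ℕ), a.2) (1:ℤ) - Finsupp.single (i, b.2) 1)) i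
        - (fun i => (Finsupp.single ((i:ℕ), a.2) (1:ℤ) - Finsupp.single (i, b.2) 1)) (i+1))
    from Finset.sum_congr rfl fun i _ => sub_sub_sub_comm _ _ _ _, this]
  abel

lemma T_inj : Function.Injective (Finsupp.linearCombination ℤ Rel) := by
  rw [← LinearMap.ker_eq_bot, LinearMap.ker_eq_bot']
  intro l hl
  by_contra hne
  obtain ⟨p, hp, hmax⟩ := Finset.exists_max_image l.support (fun q => q.1 + q.2)
    (Finsupp.support_nonempty_iff.mpr hne)
  have hval : Finsupp.linearCombination ℤ Rel l (p.1 + 1, p.2 + 1) = 0 := by rw [hl]; rfl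
  rw [Finsupp.linearCombination_apply, Finsupp.sum, Finsupp.finset_sum_apply] at hval
  rw [Finset.sum_eq_single_of_mem p hp] at hval
  · rw [Finsupp.smul_apply, Rel_apply] at hval
    have h1 : ((p.1+1, p.2+1) : ℕ × ℕ) = (p.1+1, p.2+1) := rfl
    rw [if_pos h1] at hval
    rw [if_neg (by simp [Prod.ext_iff]), if_neg (by simp [Prod.ext_iff]),
      if_neg (by simp [Prod.ext_iff])] at hval
    simp only [add_zero, sub_zero, zero_add, smul_eq_mul, mul_one] at hval
    exact (Finsupp.mem_support_iff.mp hp) hval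
  · intro q hq hqp
    have hsum : q.1 + q.2 ≤ p.1 + p.2 := hmax q hq
    rw [Finsupp.smul_apply, Rel_apply]
    rw [if_neg (fun h => by rw [Prod.ext_iff] at h; omega),
      if_neg (fun h => by rw [Prod.ext_iff] at h; exact hqp (Prod.ext_iff.mpr (by omega))),
      if_neg (fun h => by rw [Prod.ext_iff] at h; omega),
      if_neg (fun h => by rw [Prod.ext_iff] at h; omega)]
    simp

/-- The main combinatorial lemma: if the corner vector of a proper box lies in the
lattice of `P`, then all cells of the box belong to `P`. -/
lemma box_in_P {P : Finset Cell} {a b : ℕ × ℕ} (h1 : a.1 < b.1) (h2 : a.2 < b.2)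
    (hz : (Finsupp.single a 1 + Finsupp.single b 1 - Finsupp.single (b.1, a.2) 1
        - Finsupp.single (a.1, b.2) 1 : (ℕ × ℕ) →₀ ℤ) ∈ lat P) :
    ∀ r s : ℕ, a.1 ≤ r → r < b.1 → a.2 ≤ s → s < b.2 → (r, s) ∈ P := by
  rw [lat, Finsupp.mem_span_image_iff_linearCombination] at hz
  obtain ⟨l, hsupp, hTl⟩ := hz
  have hleq : l = boxF a b := by
    apply T_inj
    rw [hTl, T_boxF a b h1.le h2.le]
  intro r s hr1 hr2 hs1 hs2
  have hmem : ((r, s) : Cell) ∈ l.support := by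
    rw [hleq, Finsupp.mem_support_iff, boxF_apply,
      if_pos (by simp [Finset.mem_product, Finset.mem_Ico]; omega)]
    norm_num
  exact (Finsupp.mem_supported ℤ l).mp hsupp hmem

section Psi
open MvPolynomial

variable {K : Type*} [Field K] {P : Finset Cell}

abbrev σP (P : Finset Cell) := {v : ℕ × ℕ // v ∈ verts P}
abbrev FP (P : Finset Cell) := {v : ℕ × ℕ // freeVert P v}

lemma corner_mem {p : Cell} (hp : p ∈ P) (w : ℕ × ℕ) (hw : w ∈ cellVerts p) : w ∈ verts P :=
  Finset.mem_biUnion.mpr ⟨p, hp, hw⟩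

lemma cv1 (p : Cell) : p ∈ cellVerts p := by simp [cellVerts]
lemma cv2 (p : Cell) : (p.1 + 1, p.2) ∈ cellVerts p := by simp [cellVerts]
lemma cv3 (p : Cell) : (p.1, p.2 + 1) ∈ cellVerts p := by simp [cellVerts]
lemma cv4 (p : Cell) : (p.1 + 1, p.2 + 1) ∈ cellVerts p := by simp [cellVerts]

theorem exists_struct (ψ : MvPolynomial (σP P) K →ₐ[K] LaurentRing K P) (hψ : psiSpec K P ψ) :
    ∃ (m : σP P → (FP P →₀ ℤ)) (c : σP P → K),
      (∀ v, c v ≠ 0) ∧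
      (∀ v, ψ (X v) = AddMonoidAlgebra.single (m v) (c v)) ∧
      (∀ v (h : freeVert P v.1), m v = Finsupp.single ⟨v.1, h⟩ 1 ∧ c v = 1) ∧
      (∀ (a b cc d : σP P), a.1 ∈ P → b.1 = (a.1.1 + 1, a.1.2) → cc.1 = (a.1.1, a.1.2 + 1) →
        d.1 = (a.1.1 + 1, a.1.2 + 1) → m a + m d = m b + m cc ∧ c a * c d = c b * c cc) := by
  classical
  set B := (verts P).sup (fun w => w.1 + w.2) with hB
  have hbound : ∀ v : σP P, v.1.1 + v.1.2 ≤ B :=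
    fun v => Finset.le_sup (f := fun w : ℕ × ℕ => w.1 + w.2) v.2
  have main : ∀ n (v : σP P), B + 1 - (v.1.1 + v.1.2) ≤ n →
      ∃ (e : FP P →₀ ℤ) (c0 : K), c0 ≠ 0 ∧ ψ (X v) = AddMonoidAlgebra.single e c0 := by
    intro n
    induction n with
    | zero => intro v hv; exact absurd hv (by have := hbound v; omega)
    | succ n ih =>
      intro v hv
      by_cases hvP : v.1 ∈ P
      · set bb : σP P := ⟨(v.1.1 + 1, v.1.2), corner_mem hvP _ (cv2 v.1)⟩ with hbbdef
        set cc : σP P := ⟨(v.1.1, v.1.2 + 1), corner_mem hvP _ (cv3 v.1)⟩ with hccdef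
        set dd : σP P := ⟨(v.1.1 + 1, v.1.2 + 1), corner_mem hvP _ (cv4 v.1)⟩ with hdddef
        obtain ⟨eb, sb, hsb, hb⟩ := ih bb (by
          have h1 : (v.1.1 + 1) + v.1.2 ≤ B := hbound bb
          show B + 1 - ((v.1.1 + 1) + v.1.2) ≤ n
          omega)
        obtain ⟨ec, sc, hsc, hcEq⟩ := ih cc (by
          have h1 : v.1.1 + (v.1.2 + 1) ≤ B := hbound cc
          show B + 1 - (v.1.1 + (v.1.2 + 1)) ≤ n
          omega)
        obtain ⟨ed, sd, hsd, hd⟩ := ih dd (by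
          have h1 : (v.1.1 + 1) + (v.1.2 + 1) ≤ B := hbound dd
          show B + 1 - ((v.1.1 + 1) + (v.1.2 + 1)) ≤ n
          omega)
        have key := hψ.2 v bb cc dd hvP rfl rfl rfl
        have hdinv : (AddMonoidAlgebra.single ed sd : LaurentRing K P)
            * AddMonoidAlgebra.single (-ed) sd⁻¹ = 1 := by
          rw [AddMonoidAlgebra.single_mul_single, add_neg_cancel, mul_inv_cancel₀ hsd,
            AddMonoidAlgebra.one_def]
        refine ⟨eb + ec - ed, sb * sc * sd⁻¹, by
          simp [hsb, hsc, hsd], ?_⟩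
        have hstep : ψ (X v) = (ψ (X v) * ψ (X dd)) * AddMonoidAlgebra.single (-ed) sd⁻¹ := by
          rw [hd, mul_assoc, hdinv, mul_one]
        rw [hstep, key, hb, hcEq, AddMonoidAlgebra.single_mul_single,
          AddMonoidAlgebra.single_mul_single, sub_eq_add_neg]
      · have hfree : freeVert P v.1 := ⟨v.2, hvP⟩
        exact ⟨Finsupp.single ⟨v.1, hfree⟩ 1, 1, one_ne_zero, by rw [hψ.1 v hfree]; rfl⟩
  have ptwise : ∀ v : σP P, ∃ e c0, c0 ≠ 0 ∧ ψ (X v) = AddMonoidAlgebra.single e c0 :=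
    fun v => main (B + 1) v (by omega)
  choose m c h using ptwise
  refine ⟨m, c, fun v => (h v).1, fun v => (h v).2, ?_, ?_⟩
  · intro v hf
    have h2 : (AddMonoidAlgebra.single (m v) (c v) : LaurentRing K P)
        = AddMonoidAlgebra.single (Finsupp.single (⟨v.1, hf⟩ : FP P) (1 : ℤ)) (1 : K) := by
      rw [← (h v).2, hψ.1 v hf]; rfl
    rcases (Finsupp.single_eq_single_iff _ _ _ _).mp (congrArg AddMonoidAlgebra.coeff h2) with ⟨he, hcv⟩ | ⟨hcv, h10⟩
    · exact ⟨he, hcv⟩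
    · exact absurd h10 one_ne_zero
  · intro a b cc d haP hb hcc hd
    have key := hψ.2 a b cc d haP hb hcc hd
    rw [(h a).2, (h b).2, (h cc).2, (h d).2, AddMonoidAlgebra.single_mul_single,
      AddMonoidAlgebra.single_mul_single] at key
    rcases (Finsupp.single_eq_single_iff _ _ _ _).mp (congrArg AddMonoidAlgebra.coeff key) with ⟨he, hcv⟩ | ⟨hcv, h10⟩
    · exact ⟨he, hcv⟩
    · exact absurd hcv (mul_ne_zero (h a).1 (h d).1)

end Psi

section Forward
open MvPolynomial

variable {K : Type*} [Field K] {P : Finset Cell}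

/-- Bundled structure data for `ψ`. -/
structure Struct (K : Type*) [Field K] (P : Finset Cell)
    (ψ : MvPolynomial (σP P) K →ₐ[K] LaurentRing K P) where
  m : σP P → (FP P →₀ ℤ)
  c : σP P → K
  hc : ∀ v, c v ≠ 0
  hval : ∀ v, ψ (X v) = AddMonoidAlgebra.single (m v) (c v)
  hfree : ∀ v (h : freeVert P v.1), m v = Finsupp.single ⟨v.1, h⟩ 1 ∧ c v = 1
  hcell : ∀ (a b cc d : σP P), a.1 ∈ P → b.1 = (a.1.1 + 1, a.1.2) → cc.1 = (a.1.1, a.1.2 + 1) →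
    d.1 = (a.1.1 + 1, a.1.2 + 1) → m a + m d = m b + m cc ∧ c a * c d = c b * c cc

variable {ψ : MvPolynomial (σP P) K →ₐ[K] LaurentRing K P}

noncomputable def gm (S : Struct K P ψ) : ℕ × ℕ → (FP P →₀ ℤ) :=
  fun w => if h : w ∈ verts P then S.m ⟨w, h⟩ else 0

noncomputable def gc (S : Struct K P ψ) : ℕ × ℕ → Additive Kˣ :=
  fun w => if h : w ∈ verts P then Additive.ofMul (Units.mk0 (S.c ⟨w, h⟩) (S.hc _)) else 0

lemma gm_vert (S : Struct K P ψ) (v : σP P) : gm S v.1 = S.m v := by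
  rw [gm, dif_pos v.2]

lemma gc_vert (S : Struct K P ψ) (v : σP P) :
    gc S v.1 = Additive.ofMul (Units.mk0 (S.c v) (S.hc v)) := by
  rw [gc, dif_pos v.2]

lemma gm_Rel (S : Struct K P ψ) {p : Cell} (hp : p ∈ P) :
    Finsupp.linearCombination ℤ (gm S) (Rel p) = 0 := by
  rw [lc_Rel]
  have haa : p ∈ verts P := corner_mem hp _ (cv1 p)
  have hbb : (p.1 + 1, p.2) ∈ verts P := corner_mem hp _ (cv2 p)
  have hcc : (p.1, p.2 + 1) ∈ verts P := corner_mem hp _ (cv3 p)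
  have hdd : (p.1 + 1, p.2 + 1) ∈ verts P := corner_mem hp _ (cv4 p)
  have h1 : gm S p = S.m ⟨p, haa⟩ := gm_vert S ⟨p, haa⟩
  have h2 : gm S (p.1 + 1, p.2) = S.m ⟨(p.1 + 1, p.2), hbb⟩ := gm_vert S ⟨_, hbb⟩
  have h3 : gm S (p.1, p.2 + 1) = S.m ⟨(p.1, p.2 + 1), hcc⟩ := gm_vert S ⟨_, hcc⟩
  have h4 : gm S (p.1 + 1, p.2 + 1) = S.m ⟨(p.1 + 1, p.2 + 1), hdd⟩ := gm_vert S ⟨_, hdd⟩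
  rw [h1, h2, h3, h4, sub_sub, sub_eq_zero,
    (S.hcell ⟨p, haa⟩ ⟨_, hbb⟩ ⟨_, hcc⟩ ⟨_, hdd⟩ hp rfl rfl rfl).1]

lemma gc_Rel (S : Struct K P ψ) {p : Cell} (hp : p ∈ P) :
    Finsupp.linearCombination ℤ (gc S) (Rel p) = 0 := by
  rw [lc_Rel]
  have haa : p ∈ verts P := corner_mem hp _ (cv1 p)
  have hbb : (p.1 + 1, p.2) ∈ verts P := corner_mem hp _ (cv2 p)
  have hcc : (p.1, p.2 + 1) ∈ verts P := corner_mem hp _ (cv3 p)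
  have hdd : (p.1 + 1, p.2 + 1) ∈ verts P := corner_mem hp _ (cv4 p)
  rw [gc_vert S ⟨p, haa⟩, gc_vert S ⟨_, hbb⟩, gc_vert S ⟨_, hcc⟩, gc_vert S ⟨_, hdd⟩,
    sub_sub, sub_eq_zero]
  have hu := (S.hcell ⟨p, haa⟩ ⟨_, hbb⟩ ⟨_, hcc⟩ ⟨_, hdd⟩ hp rfl rfl rfl).2
  have hunits : Units.mk0 (S.c ⟨p, haa⟩) (S.hc _) * Units.mk0 (S.c ⟨_, hdd⟩) (S.hc _)
      = Units.mk0 (S.c ⟨_, hbb⟩) (S.hc _) * Units.mk0 (S.c ⟨_, hcc⟩) (S.hc _) := by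
    ext; simpa using hu
  have := congrArg Additive.ofMul hunits
  rw [ofMul_mul, ofMul_mul] at this
  exact this

noncomputable def iota : (FP P →₀ ℤ) →ₗ[ℤ] ((ℕ × ℕ) →₀ ℤ) :=
  Finsupp.linearCombination ℤ (fun w : FP P => Finsupp.single w.1 1)

lemma iota_single (f : FP P) : iota (Finsupp.single f 1) = Finsupp.single f.1 1 := by
  rw [iota, Finsupp.linearCombination_single, one_smul]

lemma keyE (S : Struct K P ψ) (v : σP P) :
    (Finsupp.single v.1 1 : (ℕ × ℕ) →₀ ℤ) - iota (S.m v) ∈ lat P := by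
  classical
  set B := (verts P).sup (fun w => w.1 + w.2) with hB
  have hbound : ∀ v : σP P, v.1.1 + v.1.2 ≤ B :=
    fun v => Finset.le_sup (f := fun w : ℕ × ℕ => w.1 + w.2) v.2
  suffices main : ∀ n (v : σP P), B + 1 - (v.1.1 + v.1.2) ≤ n →
      (Finsupp.single v.1 1 : (ℕ × ℕ) →₀ ℤ) - iota (S.m v) ∈ lat P by
    exact main (B + 1) v (by omega)
  intro n
  induction n with
  | zero => intro v hv; exact absurd hv (by have := hbound v; omega)
  | succ n ih =>
    intro v hv
    by_cases hvP : v.1 ∈ P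
    · have hbbm : (v.1.1 + 1, v.1.2) ∈ verts P := corner_mem hvP _ (cv2 v.1)
      have hccm : (v.1.1, v.1.2 + 1) ∈ verts P := corner_mem hvP _ (cv3 v.1)
      have hddm : (v.1.1 + 1, v.1.2 + 1) ∈ verts P := corner_mem hvP _ (cv4 v.1)
      have Hb : (Finsupp.single ((v.1.1 + 1, v.1.2) : ℕ × ℕ) 1 : (ℕ × ℕ) →₀ ℤ)
          - iota (S.m ⟨_, hbbm⟩) ∈ lat P := ih ⟨_, hbbm⟩ (by
        have h1 : (v.1.1 + 1) + v.1.2 ≤ B := hbound ⟨_, hbbm⟩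
        show B + 1 - ((v.1.1 + 1) + v.1.2) ≤ n
        omega)
      have Hc : (Finsupp.single ((v.1.1, v.1.2 + 1) : ℕ × ℕ) 1 : (ℕ × ℕ) →₀ ℤ)
          - iota (S.m ⟨_, hccm⟩) ∈ lat P := ih ⟨_, hccm⟩ (by
        have h1 : v.1.1 + (v.1.2 + 1) ≤ B := hbound ⟨_, hccm⟩
        show B + 1 - (v.1.1 + (v.1.2 + 1)) ≤ n
        omega)
      have Hd : (Finsupp.single ((v.1.1 + 1, v.1.2 + 1) : ℕ × ℕ) 1 : (ℕ × ℕ) →₀ ℤ)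
          - iota (S.m ⟨_, hddm⟩) ∈ lat P := ih ⟨_, hddm⟩ (by
        have h1 : (v.1.1 + 1) + (v.1.2 + 1) ≤ B := hbound ⟨_, hddm⟩
        show B + 1 - ((v.1.1 + 1) + (v.1.2 + 1)) ≤ n
        omega)
      have hm' : S.m v = S.m ⟨_, hbbm⟩ + S.m ⟨_, hccm⟩ - S.m ⟨_, hddm⟩ :=
        eq_sub_of_add_eq (S.hcell v ⟨_, hbbm⟩ ⟨_, hccm⟩ ⟨_, hddm⟩ hvP rfl rfl rfl).1
      have hexp : (Finsupp.single v.1 1 : (ℕ × ℕ) →₀ ℤ) - iota (S.m v)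
          = Rel v.1
            + (((Finsupp.single ((v.1.1 + 1, v.1.2) : ℕ × ℕ) 1 : (ℕ × ℕ) →₀ ℤ)
                - iota (S.m ⟨_, hbbm⟩))
              + ((Finsupp.single ((v.1.1, v.1.2 + 1) : ℕ × ℕ) 1 : (ℕ × ℕ) →₀ ℤ)
                - iota (S.m ⟨_, hccm⟩))
              - ((Finsupp.single ((v.1.1 + 1, v.1.2 + 1) : ℕ × ℕ) 1 : (ℕ × ℕ) →₀ ℤ)
                - iota (S.m ⟨_, hddm⟩))) := by
        rw [hm', map_sub, map_add, Rel]
        abel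
      rw [hexp]
      exact add_mem (Submodule.subset_span ⟨v.1, hvP, rfl⟩)
        (sub_mem (add_mem Hb Hc) Hd)
    · have hf : freeVert P v.1 := ⟨v.2, hvP⟩
      rw [(S.hfree v hf).1, iota_single, sub_self]
      exact zero_mem _

lemma box_lat {P : Finset Cell} {a b : ℕ × ℕ} (h1 : a.1 ≤ b.1) (h2 : a.2 ≤ b.2)
    (hbox : ∀ r s : ℕ, a.1 ≤ r → r < b.1 → a.2 ≤ s → s < b.2 → (r, s) ∈ P) :
    (Finsupp.single a 1 + Finsupp.single b 1 - Finsupp.single (b.1, a.2) 1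
      - Finsupp.single (a.1, b.2) 1 : (ℕ × ℕ) →₀ ℤ) ∈ lat P := by
  rw [lat, Finsupp.mem_span_image_iff_linearCombination]
  refine ⟨boxF a b, ?_, T_boxF a b h1 h2⟩
  rw [Finsupp.mem_supported]
  intro q hq
  have := Finsupp.support_finset_sum (s := (Finset.Ico a.1 b.1) ×ˢ (Finset.Ico a.2 b.2))
    (f := fun q => (Finsupp.single q 1 : Cell →₀ ℤ)) hq
  rw [Finset.mem_biUnion] at this
  obtain ⟨q', hq', hmem⟩ := this
  have : q = q' := Finset.mem_singleton.mp (Finsupp.support_single_subset hmem)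
  subst this
  rw [Finset.mem_product, Finset.mem_Ico, Finset.mem_Ico] at hq'
  have := hbox q.1 q.2 hq'.1.1 hq'.1.2 hq'.2.1 hq'.2.2
  simpa using this

lemma minor_relations (S : Struct K P ψ) {a b cD dD : σP P}
    (hII : InnerInterval P a.1 b.1) (hc : cD.1 = (b.1.1, a.1.2)) (hd : dD.1 = (a.1.1, b.1.2)) :
    S.m a + S.m b = S.m cD + S.m dD ∧ S.c a * S.c b = S.c cD * S.c dD := by
  obtain ⟨hlt1, hlt2, hbox⟩ := hII
  have hz := box_lat hlt1.le hlt2.le hbox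
  have hz' : (Finsupp.single a.1 1 + Finsupp.single b.1 1 - Finsupp.single cD.1 1
      - Finsupp.single dD.1 1 : (ℕ × ℕ) →₀ ℤ) ∈ lat P := by rw [hc, hd]; exact hz
  constructor
  · have h0 := phi_lat (gm S) (fun p hp => gm_Rel S hp) hz'
    rw [map_sub, map_sub, map_add, Finsupp.linearCombination_single,
      Finsupp.linearCombination_single, Finsupp.linearCombination_single,
      Finsupp.linearCombination_single, one_smul, one_smul, one_smul, one_smul,
      gm_vert, gm_vert, gm_vert, gm_vert, sub_sub, sub_eq_zero] at h0
    exact h0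
  · have h0 := phi_lat (gc S) (fun p hp => gc_Rel S hp) hz'
    rw [map_sub, map_sub, map_add, Finsupp.linearCombination_single,
      Finsupp.linearCombination_single, Finsupp.linearCombination_single,
      Finsupp.linearCombination_single, one_smul, one_smul, one_smul, one_smul,
      gc_vert, gc_vert, gc_vert, gc_vert, sub_sub, sub_eq_zero] at h0
    have := congrArg Additive.toMul h0
    rw [toMul_add, toMul_add, toMul_ofMul, toMul_ofMul, toMul_ofMul, toMul_ofMul] at this
    have := congrArg Units.val this
    simpa using this

lemma psi_minor_zero (S : Struct K P ψ) {a b cD dD : σP P}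
    (hII : InnerInterval P a.1 b.1) (hc : cD.1 = (b.1.1, a.1.2)) (hd : dD.1 = (a.1.1, b.1.2)) :
    ψ (X a * X b - X cD * X dD) = 0 := by
  obtain ⟨hm, hcc⟩ := minor_relations S hII hc hd
  rw [map_sub, map_mul, map_mul, S.hval, S.hval, S.hval, S.hval,
    AddMonoidAlgebra.single_mul_single, AddMonoidAlgebra.single_mul_single, hm, hcc, sub_self]

lemma ideal_le_ker (S : Struct K P ψ) :
    innerIdeal K P ≤ RingHom.ker ψ.toRingHom := by
  rw [innerIdeal, Ideal.span_le]
  rintro f ⟨a, b, cD, dD, hII, hc, hd, rfl⟩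
  rw [SetLike.mem_coe, RingHom.mem_ker]
  exact psi_minor_zero S hII hc hd

end Forward

section Backward
open MvPolynomial

variable {K : Type*} [Field K] {P : Finset Cell}
variable {ψ : MvPolynomial (σP P) K →ₐ[K] LaurentRing K P}

lemma pair_eq {a b a' b' : ℕ}
    (h : ∀ t : ℕ, ((if t ≤ a then (1:ℤ) else 0) + (if t ≤ b then 1 else 0))
      = (if t ≤ a' then 1 else 0) + (if t ≤ b' then 1 else 0)) :
    (a = a' ∧ b = b') ∨ (a = b' ∧ b = a') := by
  have hmax : max a b = max a' b' := by
    rcases Nat.lt_trichotomy (max a b) (max a' b') with hlt | heq | hlt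
    · have h1 := h (max a' b'); split_ifs at h1 <;> omega
    · exact heq
    · have h1 := h (max a b); split_ifs at h1 <;> omega
  have hmin : min a b = min a' b' := by
    rcases Nat.lt_trichotomy (min a b) (min a' b') with hlt | heq | hlt
    · have h1 := h (min a' b'); split_ifs at h1 <;> omega
    · exact heq
    · have h1 := h (min a b); split_ifs at h1 <;> omega
  omega

lemma lat_coord1 {x : (ℕ × ℕ) →₀ ℤ} (hx : x ∈ lat P) (t : ℕ) :
    Finsupp.linearCombination ℤ (fun w : ℕ × ℕ => if t ≤ w.1 then (1:ℤ) else 0) x = 0 := by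
  refine phi_lat _ (fun p hp => ?_) hx
  rw [lc_Rel]
  show (if t ≤ p.1 then (1:ℤ) else 0) + (if t ≤ p.1 + 1 then 1 else 0)
    - (if t ≤ p.1 + 1 then 1 else 0) - (if t ≤ p.1 then 1 else 0) = 0
  ring

lemma lat_coord2 {x : (ℕ × ℕ) →₀ ℤ} (hx : x ∈ lat P) (t : ℕ) :
    Finsupp.linearCombination ℤ (fun w : ℕ × ℕ => if t ≤ w.2 then (1:ℤ) else 0) x = 0 := by
  refine phi_lat _ (fun p hp => ?_) hx
  rw [lc_Rel]
  show (if t ≤ p.2 then (1:ℤ) else 0) + (if t ≤ p.2 + 1 then 1 else 0)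
    - (if t ≤ p.2 then 1 else 0) - (if t ≤ p.2 + 1 then 1 else 0) = 0
  ring

lemma box_minor {a b cD dD : σP P} (h1 : a.1.1 < b.1.1) (h2 : a.1.2 < b.1.2)
    (hc : cD.1 = (b.1.1, a.1.2)) (hd : dD.1 = (a.1.1, b.1.2))
    (hz : (Finsupp.single a.1 1 + Finsupp.single b.1 1 - Finsupp.single cD.1 1
      - Finsupp.single dD.1 1 : (ℕ × ℕ) →₀ ℤ) ∈ lat P) :
    (X a * X b - X cD * X dD : MvPolynomial (σP P) K) ∈ innerIdeal K P := by
  rw [hc, hd] at hz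
  have hII : InnerInterval P a.1 b.1 := ⟨h1, h2, box_in_P h1 h2 hz⟩
  exact Ideal.subset_span ⟨a, b, cD, dD, hII, hc, hd, rfl⟩

lemma pair_minor_aux (u v u' v' : σP P)
    (hz : (Finsupp.single u.1 1 + Finsupp.single v.1 1 - Finsupp.single u'.1 1
      - Finsupp.single v'.1 1 : (ℕ × ℕ) →₀ ℤ) ∈ lat P)
    (hA1 : u.1.1 = u'.1.1 ∧ v.1.1 = v'.1.1)
    (hA2 : (u.1.2 = u'.1.2 ∧ v.1.2 = v'.1.2) ∨ (u.1.2 = v'.1.2 ∧ v.1.2 = u'.1.2))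
    (hne : (Finsupp.single u 1 + Finsupp.single v 1 : σP P →₀ ℕ)
      ≠ Finsupp.single u' 1 + Finsupp.single v' 1) :
    (X u * X v - X u' * X v' : MvPolynomial (σP P) K) ∈ innerIdeal K P := by
  obtain ⟨e1, e2⟩ := hA1
  rcases hA2 with ⟨h2a, h2b⟩ | ⟨h2a, h2b⟩
  · exfalso
    apply hne
    have hu : u = u' := Subtype.ext (Prod.ext_iff.mpr ⟨e1, h2a⟩)
    have hv : v = v' := Subtype.ext (Prod.ext_iff.mpr ⟨e2, h2b⟩)
    rw [hu, hv]
  · by_cases hflat2 : u.1.2 = v.1.2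
    · exfalso
      apply hne
      have hu : u' = u := Subtype.ext (Prod.ext_iff.mpr ⟨e1.symm, by omega⟩)
      have hv : v' = v := Subtype.ext (Prod.ext_iff.mpr ⟨e2.symm, by omega⟩)
      rw [hu, hv]
    by_cases hflat1 : u.1.1 = v.1.1
    · exfalso
      apply hne
      have hu : u' = v := Subtype.ext (Prod.ext_iff.mpr ⟨by omega, h2b.symm⟩)
      have hv : v' = u := Subtype.ext (Prod.ext_iff.mpr ⟨by omega, h2a.symm⟩)
      rw [hu, hv, add_comm]
    rcases Nat.lt_or_ge u.1.1 v.1.1 with hx | hx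
    · rcases Nat.lt_or_ge u.1.2 v.1.2 with hy | hy
      · -- u is lower-left, v upper-right
        have hcv : v'.1 = (v.1.1, u.1.2) := Prod.ext_iff.mpr ⟨e2.symm, h2a.symm⟩
        have hdv : u'.1 = (u.1.1, v.1.2) := Prod.ext_iff.mpr ⟨e1.symm, h2b.symm⟩
        have hmem := box_minor (K := K) hx hy hcv hdv (by
          have he : (Finsupp.single u.1 1 + Finsupp.single v.1 1 - Finsupp.single v'.1 1
              - Finsupp.single u'.1 1 : (ℕ × ℕ) →₀ ℤ)
            = Finsupp.single u.1 1 + Finsupp.single v.1 1 - Finsupp.single u'.1 1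
              - Finsupp.single v'.1 1 := by abel
          rw [he]; exact hz)
        have hrw : (X u * X v - X u' * X v' : MvPolynomial (σP P) K)
            = X u * X v - X v' * X u' := by ring
        rw [hrw]; exact hmem
      · have hy' : v.1.2 < u.1.2 := by omega
        -- u' is lower-left, v' upper-right
        have ha1 : u'.1.1 < v'.1.1 := by omega
        have ha2 : u'.1.2 < v'.1.2 := by omega
        have hcv : v.1 = (v'.1.1, u'.1.2) := Prod.ext_iff.mpr ⟨e2, h2b⟩
        have hdv : u.1 = (u'.1.1, v'.1.2) := Prod.ext_iff.mpr ⟨e1, h2a⟩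
        have hmem := box_minor (K := K) ha1 ha2 hcv hdv (by
          have he : (Finsupp.single u'.1 1 + Finsupp.single v'.1 1 - Finsupp.single v.1 1
              - Finsupp.single u.1 1 : (ℕ × ℕ) →₀ ℤ)
            = -(Finsupp.single u.1 1 + Finsupp.single v.1 1 - Finsupp.single u'.1 1
              - Finsupp.single v'.1 1) := by abel
          rw [he]; exact neg_mem hz)
        have hrw : (X u * X v - X u' * X v' : MvPolynomial (σP P) K)
            = -(X u' * X v' - X v * X u) := by ring
        rw [hrw]; exact neg_mem hmem
    · have hx' : v.1.1 < u.1.1 := by omega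
      rcases Nat.lt_or_ge u.1.2 v.1.2 with hy | hy
      · -- v' lower-left, u' upper-right
        have ha1 : v'.1.1 < u'.1.1 := by omega
        have ha2 : v'.1.2 < u'.1.2 := by omega
        have hcv : u.1 = (u'.1.1, v'.1.2) := Prod.ext_iff.mpr ⟨e1, h2a⟩
        have hdv : v.1 = (v'.1.1, u'.1.2) := Prod.ext_iff.mpr ⟨e2, h2b⟩
        have hmem := box_minor (K := K) ha1 ha2 hcv hdv (by
          have he : (Finsupp.single v'.1 1 + Finsupp.single u'.1 1 - Finsupp.single u.1 1
              - Finsupp.single v.1 1 : (ℕ × ℕ) →₀ ℤ)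
            = -(Finsupp.single u.1 1 + Finsupp.single v.1 1 - Finsupp.single u'.1 1
              - Finsupp.single v'.1 1) := by abel
          rw [he]; exact neg_mem hz)
        have hrw : (X u * X v - X u' * X v' : MvPolynomial (σP P) K)
            = -(X v' * X u' - X u * X v) := by ring
        rw [hrw]; exact neg_mem hmem
      · have hy' : v.1.2 < u.1.2 := by omega
        -- v lower-left, u upper-right
        have hcv : u'.1 = (u.1.1, v.1.2) := Prod.ext_iff.mpr ⟨e1.symm, h2b.symm⟩
        have hdv : v'.1 = (v.1.1, u.1.2) := Prod.ext_iff.mpr ⟨e2.symm, h2a.symm⟩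
        have hmem := box_minor (K := K) hx' hy' hcv hdv (by
          have he : (Finsupp.single v.1 1 + Finsupp.single u.1 1 - Finsupp.single u'.1 1
              - Finsupp.single v'.1 1 : (ℕ × ℕ) →₀ ℤ)
            = Finsupp.single u.1 1 + Finsupp.single v.1 1 - Finsupp.single u'.1 1
              - Finsupp.single v'.1 1 := by abel
          rw [he]; exact hz)
        have hrw : (X u * X v - X u' * X v' : MvPolynomial (σP P) K)
            = X v * X u - X u' * X v' := by ring
        rw [hrw]; exact hmem

lemma pair_minor (S : Struct K P ψ) (u v u' v' : σP P)
    (hm : S.m u + S.m v = S.m u' + S.m v')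
    (hne : (Finsupp.single u 1 + Finsupp.single v 1 : σP P →₀ ℕ)
      ≠ Finsupp.single u' 1 + Finsupp.single v' 1) :
    (X u * X v - X u' * X v' : MvPolynomial (σP P) K) ∈ innerIdeal K P := by
  have hz : (Finsupp.single u.1 1 + Finsupp.single v.1 1 - Finsupp.single u'.1 1
      - Finsupp.single v'.1 1 : (ℕ × ℕ) →₀ ℤ) ∈ lat P := by
    have hiota : iota (S.m u) + iota (S.m v) - iota (S.m u') - iota (S.m v')
        = (0 : (ℕ × ℕ) →₀ ℤ) := by
      rw [sub_sub, ← map_add, ← map_add, hm, sub_self]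
    have hexp : (Finsupp.single u.1 1 + Finsupp.single v.1 1 - Finsupp.single u'.1 1
        - Finsupp.single v'.1 1 : (ℕ × ℕ) →₀ ℤ)
      = ((Finsupp.single u.1 1 - iota (S.m u)) + (Finsupp.single v.1 1 - iota (S.m v))
        - (Finsupp.single u'.1 1 - iota (S.m u')) - (Finsupp.single v'.1 1 - iota (S.m v')))
        + (iota (S.m u) + iota (S.m v) - iota (S.m u') - iota (S.m v')) := by abel
    rw [hexp, hiota, add_zero]
    exact sub_mem (sub_mem (add_mem (keyE S u) (keyE S v)) (keyE S u')) (keyE S v')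
  have hco1 : ∀ t : ℕ, ((if t ≤ u.1.1 then (1:ℤ) else 0) + (if t ≤ v.1.1 then 1 else 0))
      = (if t ≤ u'.1.1 then 1 else 0) + (if t ≤ v'.1.1 then 1 else 0) := by
    intro t
    have h0 : (if t ≤ u.1.1 then (1:ℤ) else 0) + (if t ≤ v.1.1 then 1 else 0)
        - (if t ≤ u'.1.1 then 1 else 0) - (if t ≤ v'.1.1 then 1 else 0) = 0 := by
      have h1 := lat_coord1 hz t
      rw [map_sub, map_sub, map_add, Finsupp.linearCombination_single,
        Finsupp.linearCombination_single, Finsupp.linearCombination_single,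
        Finsupp.linearCombination_single, one_smul, one_smul, one_smul, one_smul] at h1
      exact h1
    split_ifs at h0 ⊢ <;> omega
  have hco2 : ∀ t : ℕ, ((if t ≤ u.1.2 then (1:ℤ) else 0) + (if t ≤ v.1.2 then 1 else 0))
      = (if t ≤ u'.1.2 then 1 else 0) + (if t ≤ v'.1.2 then 1 else 0) := by
    intro t
    have h0 : (if t ≤ u.1.2 then (1:ℤ) else 0) + (if t ≤ v.1.2 then 1 else 0)
        - (if t ≤ u'.1.2 then 1 else 0) - (if t ≤ v'.1.2 then 1 else 0) = 0 := by
      have h1 := lat_coord2 hz t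
      rw [map_sub, map_sub, map_add, Finsupp.linearCombination_single,
        Finsupp.linearCombination_single, Finsupp.linearCombination_single,
        Finsupp.linearCombination_single, one_smul, one_smul, one_smul, one_smul] at h1
      exact h1
    split_ifs at h0 ⊢ <;> omega
  have P2 := pair_eq hco2
  rcases pair_eq hco1 with ⟨e1, e2⟩ | ⟨e1, e2⟩
  · exact pair_minor_aux u v u' v' hz ⟨e1, e2⟩ P2 hne
  · have hz' : (Finsupp.single u.1 1 + Finsupp.single v.1 1 - Finsupp.single v'.1 1
        - Finsupp.single u'.1 1 : (ℕ × ℕ) →₀ ℤ) ∈ lat P := by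
      have he : (Finsupp.single u.1 1 + Finsupp.single v.1 1 - Finsupp.single v'.1 1
          - Finsupp.single u'.1 1 : (ℕ × ℕ) →₀ ℤ)
        = Finsupp.single u.1 1 + Finsupp.single v.1 1 - Finsupp.single u'.1 1
          - Finsupp.single v'.1 1 := by abel
      rw [he]; exact hz
    have hne' : (Finsupp.single u 1 + Finsupp.single v 1 : σP P →₀ ℕ)
        ≠ Finsupp.single v' 1 + Finsupp.single u' 1 := by
      rw [add_comm (Finsupp.single v' 1)]; exact hne
    have hmem := pair_minor_aux (K := K) u v v' u' hz' ⟨e1, e2⟩ (Or.symm P2) hne'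
    have hrw : (X u * X v - X u' * X v' : MvPolynomial (σP P) K)
        = X u * X v - X v' * X u' := by ring
    rw [hrw]; exact hmem

lemma degree_two_decomp {α : Type*} {d : α →₀ ℕ} (hd : d.degree = 2) :
    ∃ x y : α, d = Finsupp.single x 1 + Finsupp.single y 1 := by
  classical
  have hcard : Multiset.card (Finsupp.toMultiset d) = 2 := by
    rw [Finsupp.card_toMultiset]; exact hd
  obtain ⟨x, y, hxy⟩ := Multiset.card_eq_two.mp hcard
  refine ⟨x, y, ?_⟩
  have h2 : d = Multiset.toFinsupp ({x, y} : Multiset α) := Finsupp.toMultiset_eq_iff.mp hxy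
  rw [h2, show ({x, y} : Multiset α) = {x} + {y} from rfl, map_add,
    Multiset.toFinsupp_singleton, Multiset.toFinsupp_singleton]

end Backward

end P13


set_option maxHeartbeats 1000000 in
/-- The degree-2 graded components of `I_P` and `L_P = ker ψ` coincide. -/
theorem degree_two_components_eq (K : Type*) [Field K] (P : Finset Cell)
    (ψ : MvPolynomial {v : ℕ × ℕ // v ∈ verts P} K →ₐ[K] LaurentRing K P)
    (hψ : psiSpec K P ψ) :
    ∀ f : MvPolynomial {v : ℕ × ℕ // v ∈ verts P} K, f.IsHomogeneous 2 →
      (f ∈ innerIdeal K P ↔ f ∈ RingHom.ker ψ.toRingHom) := by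
  classical
  obtain ⟨m, c, hc0, hval, hfree, hcell⟩ := P13.exists_struct ψ hψ
  let S : P13.Struct K P ψ := ⟨m, c, hc0, hval, hfree, hcell⟩
  have fwd := P13.ideal_le_ker S
  have bwd : ∀ n (f : MvPolynomial (P13.σP P) K), f.support.card ≤ n → f.IsHomogeneous 2 →
      ψ f = 0 → f ∈ innerIdeal K P := by
    intro n
    induction n with
    | zero =>
      intro f hcard _ _
      rw [Nat.le_zero, Finset.card_eq_zero, MvPolynomial.support_eq_empty] at hcard
      rw [hcard]; exact zero_mem _
    | succ n ih =>
      intro f hcard hhom hψf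
      by_cases hf0 : f = 0
      · rw [hf0]; exact zero_mem _
      have hsne : f.support.Nonempty := by
        rw [Finset.nonempty_iff_ne_empty]
        intro hemp
        exact hf0 (MvPolynomial.support_eq_empty.mp hemp)
      obtain ⟨d0, hd0⟩ := hsne
      have hdeg : ∀ d ∈ f.support, Finsupp.degree d = 2 := by
        intro d hd
        have := hhom (MvPolynomial.mem_support_iff.mp hd)
        rw [Finsupp.degree_eq_weight_one]
        exact this
      have hdec : ∀ d ∈ f.support, ∃ p : P13.σP P × P13.σP P,
          d = Finsupp.single p.1 1 + Finsupp.single p.2 1 := by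
        intro d hd
        obtain ⟨x, y, hxy⟩ := P13.degree_two_decomp (hdeg d hd)
        exact ⟨(x, y), hxy⟩
      obtain ⟨p0, hp0⟩ := hdec d0 hd0
      haveI : Nonempty (P13.σP P × P13.σP P) := ⟨p0⟩
      obtain ⟨pick, hpick_spec⟩ : ∃ pick : (P13.σP P →₀ ℕ) → P13.σP P × P13.σP P,
          ∀ d ∈ f.support, d = Finsupp.single (pick d).1 1 + Finsupp.single (pick d).2 1 := by
        refine ⟨fun d =>
          if h : ∃ p : P13.σP P × P13.σP P, d = Finsupp.single p.1 1 + Finsupp.single p.2 1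
          then h.choose else Classical.arbitrary _, fun d hd => ?_⟩
        have h := hdec d hd
        simp only [dif_pos h]
        exact h.choose_spec
      have hmono : ∀ d ∈ f.support, ψ (MvPolynomial.monomial d (1:K))
          = AddMonoidAlgebra.single (m (pick d).1 + m (pick d).2) (c (pick d).1 * c (pick d).2) := by
        intro d hd
        have hduv := hpick_spec d hd
        have hX : MvPolynomial.X (pick d).1 * MvPolynomial.X (pick d).2
            = MvPolynomial.monomial d (1:K) := by
          rw [MvPolynomial.X, MvPolynomial.X, MvPolynomial.monomial_mul, one_mul, ← hduv]
        rw [← hX, map_mul, hval, hval, AddMonoidAlgebra.single_mul_single]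
      have hψf_sum : (0 : (P13.FP P →₀ ℤ) →₀ K) = ∑ d ∈ f.support,
          (MvPolynomial.coeff d f) •
            Finsupp.single (m (pick d).1 + m (pick d).2) (c (pick d).1 * c (pick d).2) := by
        have : ψ f = ∑ d ∈ f.support,
            (MvPolynomial.coeff d f) •
              AddMonoidAlgebra.single (m (pick d).1 + m (pick d).2)
                (c (pick d).1 * c (pick d).2) := by
          conv_lhs => rw [← MvPolynomial.support_sum_monomial_coeff f]
          rw [map_sum]
          refine Finset.sum_congr rfl fun d hd => ?_
          rw [show (MvPolynomial.monomial d) (MvPolynomial.coeff d f)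
              = (MvPolynomial.coeff d f) • MvPolynomial.monomial d (1:K) by
            rw [MvPolynomial.smul_monomial, smul_eq_mul, mul_one], map_smul, hmono d hd]
        have h := congrArg AddMonoidAlgebra.coeff this
        rw [hψf, AddMonoidAlgebra.coeff_sum] at h
        exact h
      have hex : ∃ d1 ∈ f.support, d1 ≠ d0 ∧
          m (pick d1).1 + m (pick d1).2 = m (pick d0).1 + m (pick d0).2 := by
        by_contra hnone
        push_neg at hnone
        have happ := DFunLike.congr_fun hψf_sum (m (pick d0).1 + m (pick d0).2)
        rw [Finsupp.finset_sum_apply] at happ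
        rw [Finset.sum_eq_single_of_mem d0 hd0 (fun d hd hne => by
          rw [Finsupp.smul_apply, Finsupp.single_apply, if_neg (hnone d hd hne), smul_zero])]
          at happ
        rw [Finsupp.smul_apply, Finsupp.single_apply, if_pos rfl, Finsupp.coe_zero,
          Pi.zero_apply, smul_eq_mul] at happ
        rcases mul_eq_zero.mp happ.symm with h | h
        · exact MvPolynomial.mem_support_iff.mp hd0 h
        · exact mul_ne_zero (hc0 _) (hc0 _) h
      obtain ⟨d1, hd1, hd1ne, hEm1⟩ := hex
      have hgne : (Finsupp.single (pick d0).1 1 + Finsupp.single (pick d0).2 1 : P13.σP P →₀ ℕ)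
          ≠ Finsupp.single (pick d1).1 1 + Finsupp.single (pick d1).2 1 := by
        intro h
        apply hd1ne
        rw [hpick_spec d1 hd1, hpick_spec d0 hd0, h]
      have hg : (MvPolynomial.X (pick d0).1 * MvPolynomial.X (pick d0).2
          - MvPolynomial.X (pick d1).1 * MvPolynomial.X (pick d1).2 :
          MvPolynomial (P13.σP P) K) ∈ innerIdeal K P :=
        P13.pair_minor S (pick d0).1 (pick d0).2 (pick d1).1 (pick d1).2 hEm1.symm hgne
      set g : MvPolynomial (P13.σP P) K := MvPolynomial.X (pick d0).1 * MvPolynomial.X (pick d0).2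
          - MvPolynomial.X (pick d1).1 * MvPolynomial.X (pick d1).2 with hgdef
      have hgmon : g = MvPolynomial.monomial d0 1 - MvPolynomial.monomial d1 1 := by
        rw [hgdef,
          show MvPolynomial.X (pick d0).1 * MvPolynomial.X (pick d0).2
            = MvPolynomial.monomial d0 (1:K) by
            rw [MvPolynomial.X, MvPolynomial.X,
              MvPolynomial.monomial_mul, one_mul, ← hpick_spec d0 hd0],
          show MvPolynomial.X (pick d1).1 * MvPolynomial.X (pick d1).2
            = MvPolynomial.monomial d1 (1:K) by
            rw [MvPolynomial.X, MvPolynomial.X,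
              MvPolynomial.monomial_mul, one_mul, ← hpick_spec d1 hd1]]
      have hψg : ψ g = 0 := RingHom.mem_ker.mp (fwd hg)
      set f' : MvPolynomial (P13.σP P) K := f - (MvPolynomial.coeff d0 f) • g with hf'def
      have hψf' : ψ f' = 0 := by
        rw [hf'def, map_sub, map_smul, hψf, hψg, smul_zero, sub_zero]
      have hhom' : f'.IsHomogeneous 2 := by
        rw [← MvPolynomial.mem_homogeneousSubmodule] at hhom ⊢
        refine Submodule.sub_mem _ hhom (Submodule.smul_mem _ _ ?_)
        rw [MvPolynomial.mem_homogeneousSubmodule, hgmon]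
        exact (MvPolynomial.isHomogeneous_monomial _ (hdeg d0 hd0)).sub
          (MvPolynomial.isHomogeneous_monomial _ (hdeg d1 hd1))
      have hsub : f'.support ⊆ f.support.erase d0 := by
        intro e he
        have hco : MvPolynomial.coeff e f' ≠ 0 := MvPolynomial.mem_support_iff.mp he
        rw [hf'def, hgmon, MvPolynomial.coeff_sub, MvPolynomial.coeff_smul,
          MvPolynomial.coeff_sub, MvPolynomial.coeff_monomial, MvPolynomial.coeff_monomial]
          at hco
        rw [Finset.mem_erase]
        constructor
        · intro hed0
          subst hed0
          rw [if_pos rfl, if_neg hd1ne] at hco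
          simp at hco
        · rw [MvPolynomial.mem_support_iff]
          intro hcf
          rw [hcf] at hco
          by_cases he1 : d1 = e
          · subst he1
            exact MvPolynomial.mem_support_iff.mp hd1 hcf
          · rw [if_neg he1] at hco
            by_cases he0 : d0 = e
            · subst he0
              exact MvPolynomial.mem_support_iff.mp hd0 hcf
            · rw [if_neg he0] at hco
              simp at hco
      have hcard' : f'.support.card ≤ n := by
        have h1 := Finset.card_le_card hsub
        have h2 := Finset.card_erase_of_mem hd0
        omega
      have hf'mem := ih f' hcard' hhom' hψf'
      have hfeq : f = f' + (MvPolynomial.coeff d0 f) • g := by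
        rw [hf'def]; ring
      rw [hfeq, MvPolynomial.smul_eq_C_mul]
      exact Ideal.add_mem _ hf'mem (Ideal.mul_mem_left _ _ hg)
  intro f hhom
  constructor
  · intro h; exact fwd h
  · intro h
    exact bwd f.support.card f le_rfl hhom (RingHom.mem_ker.mp h)
end

section
/- Let P be a finite collection of cells. Then there exists a saturated lattice Λ ⊂ ℤ^{V(P)} such that L_P = ker ψ equals the lattice ideal I_Λ; in particular L_P is a prime ideal. -/
open scoped BigOperators

/-- Auxiliary abbreviation: the vertex index type. -/
abbrev Vtx (P : Finset Cell) : Type := {v : ℕ × ℕ // v ∈ verts P}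

/-- Auxiliary abbreviation: the exponent group of the Laurent ring. -/
abbrev FG (P : Finset Cell) : Type := {v : ℕ × ℕ // freeVert P v} →₀ ℤ

/-- `L_P = ker ψ` is the lattice ideal of a saturated lattice
`Λ ⊂ ℤ^{V(P)}`; in particular `L_P` is a prime ideal. -/
theorem LP_is_lattice_ideal (K : Type*) [Field K] (P : Finset Cell)
    (ψ : MvPolynomial {v : ℕ × ℕ // v ∈ verts P} K →ₐ[K] LaurentRing K P)
    (hψ : psiSpec K P ψ) :
    (∃ Λ : AddSubgroup ({v : ℕ × ℕ // v ∈ verts P} →₀ ℤ),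
      (∀ (c : ℤ) (w : {v : ℕ × ℕ // v ∈ verts P} →₀ ℤ), c ≠ 0 → c • w ∈ Λ → w ∈ Λ) ∧
      RingHom.ker ψ.toRingHom = Ideal.span
        { f | ∃ u w : {v : ℕ × ℕ // v ∈ verts P} →₀ ℕ,
            (u.mapRange (Nat.cast : ℕ → ℤ) Nat.cast_zero
              - w.mapRange (Nat.cast : ℕ → ℤ) Nat.cast_zero) ∈ Λ ∧
            f = MvPolynomial.monomial u (1 : K) - MvPolynomial.monomial w 1 }) ∧
    (RingHom.ker ψ.toRingHom).IsPrime := by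
  classical
  set N := (verts P).sup (fun v => v.1 + v.2) with hN
  have hbound : ∀ v : Vtx P, v.1.1 + v.1.2 ≤ N := fun v => Finset.le_sup (f := fun v => v.1 + v.2) v.2
  have hunit : ∀ μ : FG P, AddMonoidAlgebra.of' K (FG P) μ * AddMonoidAlgebra.of' K (FG P) (-μ) = 1 := by
    intro μ
    simp [AddMonoidAlgebra.of'_apply, AddMonoidAlgebra.single_mul_single,
      AddMonoidAlgebra.one_def]
  have key : ∀ (k : ℕ) (v : Vtx P), N < v.1.1 + v.1.2 + k →
      ∃ μ : FG P, ψ (MvPolynomial.X v) = AddMonoidAlgebra.of' K (FG P) μ := by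
    intro k
    induction k with
    | zero => intro v hv; exact absurd (hbound v) (by omega)
    | succ k ih =>
      intro v hv
      by_cases hf : freeVert P v.1
      · exact ⟨Finsupp.single ⟨v.1, hf⟩ 1, hψ.1 v hf⟩
      · have hvP : v.1 ∈ P := by
          by_contra hvp
          exact hf ⟨v.2, hvp⟩
        have hb : (v.1.1 + 1, v.1.2) ∈ verts P :=
          Finset.mem_biUnion.2 ⟨v.1, hvP, by simp [cellVerts]⟩
        have hc : (v.1.1, v.1.2 + 1) ∈ verts P :=
          Finset.mem_biUnion.2 ⟨v.1, hvP, by simp [cellVerts]⟩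
        have hd : (v.1.1 + 1, v.1.2 + 1) ∈ verts P :=
          Finset.mem_biUnion.2 ⟨v.1, hvP, by simp [cellVerts]⟩
        obtain ⟨μb, hμb⟩ := ih ⟨_, hb⟩ (by simp only; omega)
        obtain ⟨μc, hμc⟩ := ih ⟨_, hc⟩ (by simp only; omega)
        obtain ⟨μd, hμd⟩ := ih ⟨_, hd⟩ (by simp only; omega)
        have hrel := hψ.2 v ⟨_, hb⟩ ⟨_, hc⟩ ⟨_, hd⟩ hvP rfl rfl rfl
        rw [hμb, hμc, hμd] at hrel
        refine ⟨μb + μc + -μd, ?_⟩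
        calc ψ (MvPolynomial.X v)
            = ψ (MvPolynomial.X v) * (AddMonoidAlgebra.of' K (FG P) μd *
                AddMonoidAlgebra.of' K (FG P) (-μd)) := by rw [hunit, mul_one]
          _ = (ψ (MvPolynomial.X v) * AddMonoidAlgebra.of' K (FG P) μd) *
                AddMonoidAlgebra.of' K (FG P) (-μd) := by ring
          _ = (AddMonoidAlgebra.of' K (FG P) μb * AddMonoidAlgebra.of' K (FG P) μc) *
                AddMonoidAlgebra.of' K (FG P) (-μd) := by rw [hrel]
          _ = AddMonoidAlgebra.of' K (FG P) (μb + μc + -μd) := by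
                simp [AddMonoidAlgebra.of'_apply, AddMonoidAlgebra.single_mul_single]
  have key' : ∀ v : Vtx P, ∃ μ : FG P, ψ (MvPolynomial.X v) = AddMonoidAlgebra.of' K (FG P) μ :=
    fun v => key (N + 1) v (by omega)
  choose m hm using key'
  set φ : (Vtx P →₀ ℤ) →ₗ[ℤ] FG P := Finsupp.linearCombination ℤ m with hφ
  set Λ : AddSubgroup (Vtx P →₀ ℤ) := (LinearMap.ker φ).toAddSubgroup with hΛ
  have hmemΛ : ∀ x : Vtx P →₀ ℤ, x ∈ Λ ↔ φ x = 0 := by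
    intro x
    simp [hΛ, Submodule.mem_toAddSubgroup, LinearMap.mem_ker]
  set g : (Vtx P →₀ ℕ) → FG P :=
    fun u => φ (u.mapRange (Nat.cast : ℕ → ℤ) Nat.cast_zero) with hg
  have hgsingle : ∀ (v : Vtx P) (n : ℕ), g (Finsupp.single v n) = n • m v := by
    intro v n
    rw [hg]
    simp only [Finsupp.mapRange_single, Finsupp.linearCombination_single, hφ]
    exact natCast_zsmul (m v) n
  have hmapadd : ∀ u w : Vtx P →₀ ℕ,
      Finsupp.mapRange (Nat.cast : ℕ → ℤ) Nat.cast_zero (u + w)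
        = Finsupp.mapRange (Nat.cast : ℕ → ℤ) Nat.cast_zero u
          + Finsupp.mapRange (Nat.cast : ℕ → ℤ) Nat.cast_zero w :=
    fun u w => Finsupp.mapRange_add (fun x y => by push_cast; ring) u w
  have hgadd : ∀ u w : Vtx P →₀ ℕ, g (u + w) = g u + g w := by
    intro u w
    rw [hg]
    simp only [hmapadd, map_add]
  have hg0 : g 0 = 0 := by simp [hg]
  have hcond : ∀ u w : Vtx P →₀ ℕ,
      ((u.mapRange (Nat.cast : ℕ → ℤ) Nat.cast_zero
        - w.mapRange (Nat.cast : ℕ → ℤ) Nat.cast_zero) ∈ Λ) ↔ g u = g w := by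
    intro u w
    rw [hmemΛ, map_sub, sub_eq_zero]
  have hmono : ∀ (u : Vtx P →₀ ℕ) (c : K),
      ψ (MvPolynomial.monomial u c) = AddMonoidAlgebra.single (g u) c := by
    intro u
    induction u using Finsupp.induction with
    | zero =>
      intro c
      rw [hg0]
      simp only [MvPolynomial.monomial_zero']
      have hC : (MvPolynomial.C c : MvPolynomial (Vtx P) K)
          = algebraMap K (MvPolynomial (Vtx P) K) c := rfl
      rw [hC, AlgHom.commutes]
      rfl
    | single_add v n u hvn hn ihu =>
      intro c
      rw [MvPolynomial.monomial_single_add, map_mul, map_pow, hm v, ihu,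
        hgadd, hgsingle]
      simp [AddMonoidAlgebra.of'_apply, AddMonoidAlgebra.single_pow,
        AddMonoidAlgebra.single_mul_single]
  have hpsi : ∀ f : MvPolynomial (Vtx P) K,
      ψ f = ∑ u ∈ f.support, AddMonoidAlgebra.single (g u) (MvPolynomial.coeff u f) := by
    intro f
    conv_lhs => rw [f.as_sum]
    rw [map_sum]
    exact Finset.sum_congr rfl fun u _ => hmono u _
  set Sset : Set (MvPolynomial (Vtx P) K) :=
    { f | ∃ u w : Vtx P →₀ ℕ,
        (u.mapRange (Nat.cast : ℕ → ℤ) Nat.cast_zero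
          - w.mapRange (Nat.cast : ℕ → ℤ) Nat.cast_zero) ∈ Λ ∧
        f = MvPolynomial.monomial u (1 : K) - MvPolynomial.monomial w 1 } with hSset
  have hker : ∀ f : MvPolynomial (Vtx P) K,
      f ∈ RingHom.ker ψ.toRingHom ↔ ψ f = 0 := by
    intro f; rw [RingHom.mem_ker]; rfl
  have main : ∀ (n : ℕ) (f : MvPolynomial (Vtx P) K), f.support.card ≤ n → ψ f = 0 →
      f ∈ Ideal.span Sset := by
    intro n
    induction n with
    | zero =>
      intro f h0 _
      have : f.support = ∅ := Finset.card_eq_zero.1 (Nat.le_zero.1 h0)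
      rw [MvPolynomial.support_eq_empty.1 this]
      exact Ideal.zero_mem _
    | succ n ih =>
      intro f hcard hker0
      by_cases hf0 : f = 0
      · rw [hf0]; exact Ideal.zero_mem _
      obtain ⟨u0, hu0⟩ := Finset.nonempty_of_ne_empty
        (fun h => hf0 (MvPolynomial.support_eq_empty.1 h))
      set c0 := MvPolynomial.coeff u0 f with hc0
      have hc0ne : c0 ≠ 0 := MvPolynomial.mem_support_iff.1 hu0
      have hexists : ∃ u1 ∈ f.support, u1 ≠ u0 ∧ g u1 = g u0 := by
        by_contra hno
        push_neg at hno
        have happ : (ψ f).coeff (g u0) = c0 := by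
          rw [hpsi f, AddMonoidAlgebra.coeff_sum, Finset.sum_apply']
          rw [Finset.sum_eq_single u0]
          · simp [AddMonoidAlgebra.coeff_single, Finsupp.single_apply, hc0]
          · intro u hu hne
            have : g u ≠ g u0 := hno u hu hne
            simp [AddMonoidAlgebra.coeff_single, Finsupp.single_apply, this]
          · intro h; exact absurd hu0 h
        rw [hker0] at happ
        exact hc0ne happ.symm
      obtain ⟨u1, hu1, hne10, hgu⟩ := hexists
      set b : MvPolynomial (Vtx P) K :=
        MvPolynomial.monomial u0 (1 : K) - MvPolynomial.monomial u1 1 with hb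
      set f' := f - MvPolynomial.C c0 * b with hf'
      have hfb : f = f' + MvPolynomial.C c0 * b := by rw [hf']; ring
      have hbS : b ∈ Sset := ⟨u0, u1, (hcond u0 u1).2 hgu.symm, rfl⟩
      have hψb : ψ b = 0 := by
        rw [hb, map_sub, hmono, hmono, hgu, sub_self]
      have hψf' : ψ f' = 0 := by
        rw [hf', map_sub, hker0, map_mul, hψb, mul_zero, sub_zero]
      have hcoeff : ∀ u : Vtx P →₀ ℕ, MvPolynomial.coeff u f' =
          MvPolynomial.coeff u f - (if u0 = u then c0 else 0) + (if u1 = u then c0 else 0) := by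
        intro u
        simp only [hf', hb, MvPolynomial.coeff_sub, mul_sub, MvPolynomial.C_mul_monomial,
          mul_one, MvPolynomial.coeff_monomial]
        ring
      have hsupp : f'.support ⊆ f.support.erase u0 := by
        intro u hu
        have hune : MvPolynomial.coeff u f' ≠ 0 := MvPolynomial.mem_support_iff.1 hu
        rw [Finset.mem_erase]
        constructor
        · intro hequ
          apply hune
          rw [hequ, hcoeff u0, ← hc0]
          simp [hne10]
        · rw [MvPolynomial.mem_support_iff]
          intro hcu
          apply hune
          have hni0 : u ≠ u0 := by
            intro h; rw [h] at hcu; exact hc0ne hcu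
          have hni1 : u ≠ u1 := by
            intro h; rw [h] at hcu; exact MvPolynomial.mem_support_iff.1 hu1 hcu
          rw [hcoeff u, hcu]
          simp [Ne.symm hni0, Ne.symm hni1]
      have hcard' : f'.support.card ≤ n := by
        have := Finset.card_le_card hsupp
        rw [Finset.card_erase_of_mem hu0] at this
        omega
      rw [hfb]
      exact Ideal.add_mem _ (ih f' hcard' hψf')
        (Ideal.mul_mem_left _ _ (Ideal.subset_span hbS))
  refine ⟨⟨Λ, ?_, ?_⟩, ?_⟩
  · intro c w hc hcw
    rw [hmemΛ] at hcw ⊢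
    rw [map_smul] at hcw
    rcases smul_eq_zero.1 hcw with h | h
    · exact absurd h hc
    · exact h
  · apply le_antisymm
    · intro f hf
      exact main f.support.card f le_rfl ((hker f).1 hf)
    · rw [Ideal.span_le]
      rintro f ⟨u, w, hΛm, rfl⟩
      have hguw : g u = g w := (hcond u w).1 hΛm
      rw [SetLike.mem_coe, hker]
      rw [map_sub, hmono, hmono, hguw, sub_self]
  · haveI : IsDomain (LaurentRing K P) := NoZeroDivisors.to_isDomain _
    exact RingHom.ker_isPrime _
end

section
/- Let P be a finite collection of cells. Then the ideal I_P generated by the inner 2-minors of P is a prime ideal if and only if I_P = L_P, where L_P is the kernel of the natural map ψ from S to the Laurent ring in the free-vertex variables. -/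
open scoped BigOperators

def Mbound (P : Finset Cell) : ℕ := P.sup (fun c => c.1 + c.2)

lemma mem_verts_of_mem {P : Finset Cell} {c : Cell} (hc : c ∈ P) {x : ℕ×ℕ}
    (hx : x ∈ cellVerts c) : x ∈ verts P := Finset.mem_biUnion.2 ⟨c, hc, hx⟩

lemma corner_mem₀ {P : Finset Cell} {c : Cell} (hc : c ∈ P) : c ∈ verts P :=
  mem_verts_of_mem hc (by simp [cellVerts])
lemma corner_mem₁ {P : Finset Cell} {c : Cell} (hc : c ∈ P) : (c.1+1, c.2) ∈ verts P :=
  mem_verts_of_mem hc (by simp [cellVerts])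
lemma corner_mem₂ {P : Finset Cell} {c : Cell} (hc : c ∈ P) : (c.1, c.2+1) ∈ verts P :=
  mem_verts_of_mem hc (by simp [cellVerts])
lemma corner_mem₃ {P : Finset Cell} {c : Cell} (hc : c ∈ P) : (c.1+1, c.2+1) ∈ verts P :=
  mem_verts_of_mem hc (by simp [cellVerts])

open Classical in
noncomputable def gfun (P : Finset Cell) (v : ℕ × ℕ) : ({v : ℕ × ℕ // freeVert P v} →₀ ℤ) :=
  if h : freeVert P v then Finsupp.single ⟨v, h⟩ 1
  else if v ∈ P then
    gfun P (v.1+1, v.2) + gfun P (v.1, v.2+1) - gfun P (v.1+1, v.2+1)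
  else 0
termination_by Mbound P + 2 - (v.1 + v.2)
decreasing_by
  all_goals
    have : v.1 + v.2 ≤ Mbound P := Finset.le_sup (f := fun c : Cell => c.1 + c.2) ‹v ∈ P›
  all_goals omega

lemma gfun_free {P : Finset Cell} {v : ℕ×ℕ} (h : freeVert P v) :
    gfun P v = Finsupp.single ⟨v, h⟩ 1 := by
  rw [gfun]; simp [h]

lemma gfun_nonfree {P : Finset Cell} {v : ℕ×ℕ} (hv : v ∈ P) :
    gfun P v = gfun P (v.1+1, v.2) + gfun P (v.1, v.2+1) - gfun P (v.1+1, v.2+1) := by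
  conv_lhs => rw [gfun]
  have : ¬ freeVert P v := fun h => h.2 hv
  simp [this, hv]

lemma gfun_rel {P : Finset Cell} {v : ℕ×ℕ} (hv : v ∈ P) :
    gfun P v + gfun P (v.1+1, v.2+1) = gfun P (v.1+1, v.2) + gfun P (v.1, v.2+1) := by
  rw [gfun_nonfree hv]; abel

section
variable {K : Type*} [Field K] {P : Finset Cell}
  {ψ : MvPolynomial {v : ℕ × ℕ // v ∈ verts P} K →ₐ[K] LaurentRing K P}

local notation "sgl" => AddMonoidAlgebra.single (k := K)

lemma sgl_mul (a b : {v : ℕ × ℕ // freeVert P v} →₀ ℤ) :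
    (AddMonoidAlgebra.single a (1:K)) * AddMonoidAlgebra.single b 1
      = AddMonoidAlgebra.single (a + b) 1 := by
  rw [AddMonoidAlgebra.single_mul_single]; ring_nf

lemma psi_X (hψ : psiSpec K P ψ) (v : {v : ℕ × ℕ // v ∈ verts P}) :
    ψ (MvPolynomial.X v) = AddMonoidAlgebra.single (gfun P v.1) 1 := by
  suffices H : ∀ n (v : {v : ℕ × ℕ // v ∈ verts P}), Mbound P + 2 - (v.1.1 + v.1.2) ≤ n →
      ψ (MvPolynomial.X v) = AddMonoidAlgebra.single (gfun P v.1) 1 from H _ v le_rfl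
  intro n
  induction n with
  | zero =>
    intro v hn
    have hv : v.1 ∉ P := by
      intro hv
      have : v.1.1 + v.1.2 ≤ Mbound P := Finset.le_sup (f := fun c : Cell => c.1 + c.2) hv
      omega
    have hfree : freeVert P v.1 := ⟨v.2, hv⟩
    rw [hψ.1 v hfree, gfun_free hfree]; rfl
  | succ n ih =>
    intro v hn
    by_cases hfree : freeVert P v.1
    · rw [hψ.1 v hfree, gfun_free hfree]; rfl
    · have hv : v.1 ∈ P := by
        by_contra hv; exact hfree ⟨v.2, hv⟩
      have hsum : v.1.1 + v.1.2 ≤ Mbound P := Finset.le_sup (f := fun c : Cell => c.1 + c.2) hv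
      set b : {v : ℕ × ℕ // v ∈ verts P} := ⟨(v.1.1+1, v.1.2), corner_mem₁ hv⟩
      set c : {v : ℕ × ℕ // v ∈ verts P} := ⟨(v.1.1, v.1.2+1), corner_mem₂ hv⟩
      set d : {v : ℕ × ℕ // v ∈ verts P} := ⟨(v.1.1+1, v.1.2+1), corner_mem₃ hv⟩
      have hb := ih b (by simp only [b]; omega)
      have hc := ih c (by simp only [c]; omega)
      have hd := ih d (by simp only [d]; omega)
      have hrel := hψ.2 v b c d hv rfl rfl rfl
      rw [hb, hc, hd] at hrel
      have hcan : ψ (MvPolynomial.X v) =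
          AddMonoidAlgebra.single (gfun P b.1 + gfun P c.1 - gfun P d.1) (1:K) := by
        have h1 : (AddMonoidAlgebra.single (gfun P d.1) (1:K)) *
            AddMonoidAlgebra.single (gfun P b.1 + gfun P c.1 - gfun P d.1) 1
              = AddMonoidAlgebra.single (gfun P b.1 + gfun P c.1) 1 := by
          rw [sgl_mul]; congr 1; abel
        calc ψ (MvPolynomial.X v)
            = ψ (MvPolynomial.X v) * 1 := by ring
          _ = ψ (MvPolynomial.X v) * ((AddMonoidAlgebra.single (gfun P d.1) (1:K)) *
                AddMonoidAlgebra.single (-(gfun P d.1)) 1) := by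
              rw [sgl_mul]; simp [AddMonoidAlgebra.one_def]
          _ = (ψ (MvPolynomial.X v) * AddMonoidAlgebra.single (gfun P d.1) 1) *
                AddMonoidAlgebra.single (-(gfun P d.1)) 1 := by ring
          _ = (AddMonoidAlgebra.single (gfun P b.1) (1:K) *
                AddMonoidAlgebra.single (gfun P c.1) 1) *
                AddMonoidAlgebra.single (-(gfun P d.1)) 1 := by rw [hrel]
          _ = AddMonoidAlgebra.single (gfun P b.1 + gfun P c.1 - gfun P d.1) 1 := by
              rw [sgl_mul, sgl_mul]; congr 1; abel
      rw [hcan, gfun_nonfree hv]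
end

section
variable {K : Type*} [Field K] {P : Finset Cell}
  {ψ : MvPolynomial {v : ℕ × ℕ // v ∈ verts P} K →ₐ[K] LaurentRing K P}

lemma gfun_inner {a b : ℕ×ℕ} (h : InnerInterval P a b) :
    gfun P a + gfun P b = gfun P (b.1, a.2) + gfun P (a.1, b.2) := by
  suffices H : ∀ n (a b : ℕ×ℕ), InnerInterval P a b → (b.1 - a.1) + (b.2 - a.2) ≤ n →
      gfun P a + gfun P b = gfun P (b.1, a.2) + gfun P (a.1, b.2) from H _ a b h le_rfl
  intro n
  induction n with
  | zero => intro a b ⟨h1, h2, _⟩ hn; omega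
  | succ n ih =>
    intro a b ⟨h1, h2, hcells⟩ hn
    rcases Nat.lt_or_ge (a.1 + 1) b.1 with hb1 | hb1
    · -- split horizontally at a.1+1
      have e1 : gfun P (a.1+1, a.2) + gfun P b
          = gfun P (b.1, a.2) + gfun P (a.1+1, b.2) := by
        have := ih (a.1+1, a.2) b ⟨hb1, h2, fun r s hr hr' hs hs' => hcells r s (by omega) hr' hs hs'⟩ (by omega)
        simpa using this
      have e2 : gfun P a + gfun P (a.1+1, b.2)
          = gfun P (a.1+1, a.2) + gfun P (a.1, b.2) := by
        have := ih a (a.1+1, b.2) ⟨by omega, h2, fun r s hr hr' hs hs' => hcells r s hr (by omega) hs hs'⟩ (by omega)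
        simpa using this
      have key : (gfun P a + gfun P b) + (gfun P (a.1+1, a.2) + gfun P (a.1+1, b.2))
          = (gfun P (b.1, a.2) + gfun P (a.1, b.2)) + (gfun P (a.1+1, a.2) + gfun P (a.1+1, b.2)) := by
        calc (gfun P a + gfun P b) + (gfun P (a.1+1, a.2) + gfun P (a.1+1, b.2))
            = (gfun P (a.1+1, a.2) + gfun P b) + (gfun P a + gfun P (a.1+1, b.2)) := by abel
          _ = (gfun P (b.1, a.2) + gfun P (a.1+1, b.2)) + (gfun P (a.1+1, a.2) + gfun P (a.1, b.2)) := by rw [e1, e2]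
          _ = (gfun P (b.1, a.2) + gfun P (a.1, b.2)) + (gfun P (a.1+1, a.2) + gfun P (a.1+1, b.2)) := by abel
      exact add_right_cancel key
    · rcases Nat.lt_or_ge (a.2 + 1) b.2 with hb2 | hb2
      · -- split vertically at a.2+1
        have e1 : gfun P (a.1, a.2+1) + gfun P b
            = gfun P (b.1, a.2+1) + gfun P (a.1, b.2) := by
          have := ih (a.1, a.2+1) b ⟨h1, hb2, fun r s hr hr' hs hs' => hcells r s hr hr' (by omega) hs'⟩ (by omega)
          simpa using this
        have e2 : gfun P a + gfun P (b.1, a.2+1)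
            = gfun P (b.1, a.2) + gfun P (a.1, a.2+1) := by
          have := ih a (b.1, a.2+1) ⟨h1, by omega, fun r s hr hr' hs hs' => hcells r s hr hr' hs (by omega)⟩ (by omega)
          simpa using this
        have key : (gfun P a + gfun P b) + (gfun P (a.1, a.2+1) + gfun P (b.1, a.2+1))
            = (gfun P (b.1, a.2) + gfun P (a.1, b.2)) + (gfun P (a.1, a.2+1) + gfun P (b.1, a.2+1)) := by
          calc (gfun P a + gfun P b) + (gfun P (a.1, a.2+1) + gfun P (b.1, a.2+1))
              = (gfun P (a.1, a.2+1) + gfun P b) + (gfun P a + gfun P (b.1, a.2+1)) := by abel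
            _ = (gfun P (b.1, a.2+1) + gfun P (a.1, b.2)) + (gfun P (b.1, a.2) + gfun P (a.1, a.2+1)) := by rw [e1, e2]
            _ = (gfun P (b.1, a.2) + gfun P (a.1, b.2)) + (gfun P (a.1, a.2+1) + gfun P (b.1, a.2+1)) := by abel
        exact add_right_cancel key
      · -- unit cell
        have hb : b = (a.1+1, a.2+1) := by
          ext <;> omega
        subst hb
        have haP : a ∈ P := by
          have := hcells a.1 a.2 le_rfl (by omega) le_rfl (by omega)
          simpa using this
        have := gfun_rel haP
        simpa using this.symm ▸ this

lemma gfun_inner' {a b : ℕ×ℕ} (h : InnerInterval P a b) :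
    gfun P a + gfun P b = gfun P (b.1, a.2) + gfun P (a.1, b.2) := gfun_inner h

end

noncomputable def phi (P : Finset Cell) (u : {v : ℕ × ℕ // v ∈ verts P} →₀ ℕ) :
    {v : ℕ × ℕ // freeVert P v} →₀ ℤ :=
  u.sum fun v n => (n : ℤ) • gfun P v.1

section
variable {K : Type*} [Field K] {P : Finset Cell}
  {ψ : MvPolynomial {v : ℕ × ℕ // v ∈ verts P} K →ₐ[K] LaurentRing K P}

lemma phi_add (u u' : {v : ℕ × ℕ // v ∈ verts P} →₀ ℕ) :
    phi P (u + u') = phi P u + phi P u' := by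
  unfold phi
  apply Finsupp.sum_add_index' (by intro a; simp)
  intro a b₁ b₂; push_cast; rw [add_smul]

lemma phi_single (v : {v : ℕ × ℕ // v ∈ verts P}) (n : ℕ) :
    phi P (Finsupp.single v n) = (n:ℤ) • gfun P v.1 := by
  unfold phi
  exact Finsupp.sum_single_index (by simp)

lemma phi_zero : phi P (0 : {v : ℕ × ℕ // v ∈ verts P} →₀ ℕ) = 0 := by
  unfold phi; simp

lemma psi_monomial (hψ : psiSpec K P ψ) (u : {v : ℕ × ℕ // v ∈ verts P} →₀ ℕ) :
    ψ (MvPolynomial.monomial u 1) = AddMonoidAlgebra.single (phi P u) 1 := by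
  induction u using Finsupp.induction with
  | zero =>
    rw [phi_zero]
    have : (MvPolynomial.monomial 0 (1:K) : MvPolynomial {v : ℕ × ℕ // v ∈ verts P} K) = 1 := by
      simp
    rw [this, map_one, AddMonoidAlgebra.one_def]
  | single_add a n f ha hn ihf =>
    have hmul : (MvPolynomial.monomial (Finsupp.single a n + f) (1:K)
        : MvPolynomial {v : ℕ × ℕ // v ∈ verts P} K)
        = MvPolynomial.monomial (Finsupp.single a n) 1 * MvPolynomial.monomial f 1 := by
      rw [MvPolynomial.monomial_mul]; ring_nf
    rw [hmul, map_mul, ihf, ← MvPolynomial.X_pow_eq_monomial, map_pow, psi_X hψ,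
      AddMonoidAlgebra.single_pow, one_pow, sgl_mul, phi_add, phi_single]
    congr 1

lemma innerIdeal_le_ker (hψ : psiSpec K P ψ) :
    innerIdeal K P ≤ RingHom.ker ψ.toRingHom := by
  rw [innerIdeal, Ideal.span_le]
  rintro f ⟨a, b, c, d, hab, hc, hd, rfl⟩
  simp only [SetLike.mem_coe, RingHom.mem_ker, AlgHom.toRingHom_eq_coe, RingHom.coe_coe]
  rw [map_sub, map_mul, map_mul, psi_X hψ, psi_X hψ, psi_X hψ, psi_X hψ,
    sgl_mul, sgl_mul, hc, hd, gfun_inner hab, sub_self]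

lemma psi_monomial_ne_zero (hψ : psiSpec K P ψ) (u : {v : ℕ × ℕ // v ∈ verts P} →₀ ℕ) :
    ψ (MvPolynomial.monomial u 1) ≠ 0 := by
  rw [psi_monomial hψ]
  simp [AddMonoidAlgebra.single_eq_zero]

end

noncomputable def wt (P : Finset Cell) (u : {v : ℕ × ℕ // v ∈ verts P} →₀ ℕ) : ℕ :=
  u.sum fun v n => if v.1 ∈ P then n * 3 ^ (Mbound P + 2 - (v.1.1 + v.1.2)) else 0

section
variable {K : Type*} [Field K] {P : Finset Cell}

lemma wt_add (u u' : {v : ℕ × ℕ // v ∈ verts P} →₀ ℕ) :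
    wt P (u + u') = wt P u + wt P u' := by
  unfold wt
  apply Finsupp.sum_add_index' (by intro a; simp)
  intro a b₁ b₂; split <;> ring

lemma wt_single (v : {v : ℕ × ℕ // v ∈ verts P}) (n : ℕ) :
    wt P (Finsupp.single v n)
      = if v.1 ∈ P then n * 3 ^ (Mbound P + 2 - (v.1.1 + v.1.2)) else 0 :=
  Finsupp.sum_single_index (by simp)

lemma phi_apply_free (u : {v : ℕ × ℕ // v ∈ verts P} →₀ ℕ)
    (hu : ∀ v ∈ u.support, freeVert P (v:{v : ℕ × ℕ // v ∈ verts P}).1)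
    (v : ℕ×ℕ) (h : freeVert P v) (hv : v ∈ verts P) :
    phi P u (⟨v, h⟩ : {v : ℕ × ℕ // freeVert P v}) = u ⟨v, hv⟩ := by
  unfold phi
  rw [Finsupp.sum, Finsupp.finset_sum_apply]
  rw [Finset.sum_eq_single (⟨v, hv⟩ : {v : ℕ × ℕ // v ∈ verts P})]
  · by_cases hm : (⟨v, hv⟩ : {v : ℕ × ℕ // v ∈ verts P}) ∈ u.support
    · rw [gfun_free (hu _ hm)]
      simp
    · rw [Finsupp.notMem_support_iff.1 hm]
      simp
  · intro w hw hne
    rw [gfun_free (hu _ hw)]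
    have : (⟨w.1, hu _ hw⟩ : {v : ℕ × ℕ // freeVert P v}) ≠ ⟨v, h⟩ := by
      intro he
      apply hne
      apply Subtype.ext
      have := congrArg Subtype.val he
      exact this
    simp [Finsupp.single_apply, this]
  · intro hnm
    rw [Finsupp.notMem_support_iff.1 hnm]
    simp

lemma phi_inj_free (u w : {v : ℕ × ℕ // v ∈ verts P} →₀ ℕ)
    (hu : ∀ v ∈ u.support, freeVert P (v:{v : ℕ × ℕ // v ∈ verts P}).1)
    (hw : ∀ v ∈ w.support, freeVert P (v:{v : ℕ × ℕ // v ∈ verts P}).1)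
    (h : phi P u = phi P w) : u = w := by
  ext v
  by_cases hf : freeVert P v.1
  · have h1 := phi_apply_free u hu v.1 hf v.2
    have h2 := phi_apply_free w hw v.1 hf v.2
    rw [h] at h1
    have := h1.symm.trans h2
    exact_mod_cast this
  · have h1 : v ∉ u.support := fun hm => hf (hu v hm)
    have h2 : v ∉ w.support := fun hm => hf (hw v hm)
    rw [Finsupp.notMem_support_iff.1 h1, Finsupp.notMem_support_iff.1 h2]

end

section
variable {K : Type*} [Field K] {P : Finset Cell}

open MvPolynomial

lemma X_as_monomial (a : {v : ℕ × ℕ // v ∈ verts P}) :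
    (X a : MvPolynomial {v : ℕ × ℕ // v ∈ verts P} K)
      = monomial (Finsupp.single a 1) 1 := rfl

lemma mul_minor_mem {a b c d : {v : ℕ × ℕ // v ∈ verts P}}
    (h : (X a * X b - X c * X d : MvPolynomial {v : ℕ × ℕ // v ∈ verts P} K) ∈ innerIdeal K P)
    (m : {v : ℕ × ℕ // v ∈ verts P} →₀ ℕ) :
    (monomial (m + Finsupp.single a 1 + Finsupp.single b 1) (1:K)
      - monomial (m + Finsupp.single c 1 + Finsupp.single d 1) 1) ∈ innerIdeal K P := by
  have : (monomial (m + Finsupp.single a 1 + Finsupp.single b 1) (1:K)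
      - monomial (m + Finsupp.single c 1 + Finsupp.single d 1) 1)
      = monomial m 1 * (X a * X b - X c * X d) := by
    rw [mul_sub, X_as_monomial, X_as_monomial, X_as_monomial, X_as_monomial,
      ← mul_assoc, ← mul_assoc, monomial_mul, monomial_mul, monomial_mul, monomial_mul]
    ring_nf
  rw [this]
  exact Ideal.mul_mem_left _ _ h

lemma cell_minor_mem {v : {v : ℕ × ℕ // v ∈ verts P}} (hvP : v.1 ∈ P) :
    (X v * X (⟨(v.1.1+1, v.1.2+1), corner_mem₃ hvP⟩ : {v : ℕ × ℕ // v ∈ verts P})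
      - X (⟨(v.1.1+1, v.1.2), corner_mem₁ hvP⟩ : {v : ℕ × ℕ // v ∈ verts P})
        * X (⟨(v.1.1, v.1.2+1), corner_mem₂ hvP⟩ : {v : ℕ × ℕ // v ∈ verts P})
      : MvPolynomial {v : ℕ × ℕ // v ∈ verts P} K) ∈ innerIdeal K P := by
  apply Ideal.subset_span
  refine ⟨v, ⟨(v.1.1+1, v.1.2+1), corner_mem₃ hvP⟩, ⟨(v.1.1+1, v.1.2), corner_mem₁ hvP⟩,
    ⟨(v.1.1, v.1.2+1), corner_mem₂ hvP⟩, ?_, rfl, rfl, rfl⟩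
  refine ⟨Nat.lt_succ_self _, Nat.lt_succ_self _, ?_⟩
  intro r s h1 h2 h3 h4
  have h2' : r < v.1.1 + 1 := h2
  have h4' : s < v.1.2 + 1 := h4
  have hr : r = v.1.1 := by omega
  have hs : s = v.1.2 := by omega
  subst hr hs
  simpa using hvP

lemma monC :
    ∀ u w : {v : ℕ × ℕ // v ∈ verts P} →₀ ℕ, phi P u = phi P w →
      ∃ k : {v : ℕ × ℕ // v ∈ verts P} →₀ ℕ,
        (monomial (u + k) (1:K) - monomial (w + k) 1) ∈ innerIdeal K P := by
  suffices H : ∀ n (u w : {v : ℕ × ℕ // v ∈ verts P} →₀ ℕ), wt P u + wt P w ≤ n →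
      phi P u = phi P w →
      ∃ k, (monomial (u + k) (1:K) - monomial (w + k) 1) ∈ innerIdeal K P from
    fun u w h => H _ u w le_rfl h
  -- the one-sided reduction step
  have step : ∀ n, (∀ (u w : {v : ℕ × ℕ // v ∈ verts P} →₀ ℕ), wt P u + wt P w ≤ n →
      phi P u = phi P w →
      ∃ k, (monomial (u + k) (1:K) - monomial (w + k) 1) ∈ innerIdeal K P) →
      ∀ (u w : {v : ℕ × ℕ // v ∈ verts P} →₀ ℕ), wt P u + wt P w ≤ n + 1 →
      phi P u = phi P w →
      ∀ v ∈ u.support, (v:{v : ℕ × ℕ // v ∈ verts P}).1 ∈ P →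
      ∃ k, (monomial (u + k) (1:K) - monomial (w + k) 1) ∈ innerIdeal K P := by
    intro n ih u w hwt hphi v hv hvP
    set r : {v : ℕ × ℕ // v ∈ verts P} := ⟨(v.1.1+1, v.1.2), corner_mem₁ hvP⟩ with hr
    set t : {v : ℕ × ℕ // v ∈ verts P} := ⟨(v.1.1, v.1.2+1), corner_mem₂ hvP⟩ with ht
    set q : {v : ℕ × ℕ // v ∈ verts P} := ⟨(v.1.1+1, v.1.2+1), corner_mem₃ hvP⟩ with hq
    have huv : 1 ≤ u v := Nat.one_le_iff_ne_zero.2 (Finsupp.mem_support_iff.1 hv)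
    obtain ⟨u'', hu⟩ : ∃ u'', u = u'' + Finsupp.single v 1 := by
      refine ⟨u - Finsupp.single v 1, ?_⟩
      ext x
      by_cases hx : x = v
      · subst hx; simp [Finsupp.single_apply]; omega
      · simp [Finsupp.single_apply, Ne.symm hx, hx]
    set u' : {v : ℕ × ℕ // v ∈ verts P} →₀ ℕ :=
      u'' + Finsupp.single r 1 + Finsupp.single t 1 with hu'
    -- phi equality for the reduced pair
    have hgrel := gfun_rel hvP
    have hphi' : phi P u' = phi P (w + Finsupp.single q 1) := by
      rw [hu', phi_add, phi_add, phi_add, phi_single, phi_single, phi_single]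
      have hphiu : phi P u = phi P u'' + gfun P v.1 := by
        rw [hu, phi_add, phi_single]; simp
      rw [← hphi, hphiu]
      simp only [Nat.cast_one, one_smul]
      have : gfun P r.1 + gfun P t.1 = gfun P v.1 + gfun P q.1 := by
        rw [hr, ht, hq]; exact hgrel.symm
      calc phi P u'' + gfun P r.1 + gfun P t.1
          = phi P u'' + (gfun P r.1 + gfun P t.1) := by abel
        _ = phi P u'' + (gfun P v.1 + gfun P q.1) := by rw [this]
        _ = phi P u'' + gfun P v.1 + gfun P q.1 := by abel
    -- weight decrease
    have hsum : v.1.1 + v.1.2 ≤ Mbound P :=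
      Finset.le_sup (f := fun c : Cell => c.1 + c.2) hvP
    have hwt' : wt P u' + wt P (w + Finsupp.single q 1) ≤ n := by
      have h9 : 3 ^ (Mbound P + 2 - (v.1.1 + v.1.2)) = 9 * 3 ^ (Mbound P - (v.1.1 + v.1.2)) := by
        rw [show Mbound P + 2 - (v.1.1 + v.1.2) = (Mbound P - (v.1.1 + v.1.2)) + 2 from by omega,
          pow_succ, pow_succ]; ring
      have h3 : 3 ^ (Mbound P + 2 - (v.1.1 + 1 + v.1.2)) = 3 * 3 ^ (Mbound P - (v.1.1 + v.1.2)) := by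
        rw [show Mbound P + 2 - (v.1.1 + 1 + v.1.2) = (Mbound P - (v.1.1 + v.1.2)) + 1 from by omega,
          pow_succ]; ring
      have h3' : 3 ^ (Mbound P + 2 - (v.1.1 + (v.1.2 + 1))) = 3 * 3 ^ (Mbound P - (v.1.1 + v.1.2)) := by
        rw [show Mbound P + 2 - (v.1.1 + (v.1.2 + 1)) = (Mbound P - (v.1.1 + v.1.2)) + 1 from by omega,
          pow_succ]; ring
      have h1' : 3 ^ (Mbound P + 2 - (v.1.1 + 1 + (v.1.2 + 1))) = 3 ^ (Mbound P - (v.1.1 + v.1.2)) := by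
        rw [show Mbound P + 2 - (v.1.1 + 1 + (v.1.2 + 1)) = Mbound P - (v.1.1 + v.1.2) from by omega]
      have hx : 1 ≤ 3 ^ (Mbound P - (v.1.1 + v.1.2)) := Nat.one_le_pow _ _ (by norm_num)
      have hwtu : wt P u = wt P u'' + 9 * 3 ^ (Mbound P - (v.1.1 + v.1.2)) := by
        rw [hu, wt_add, wt_single, if_pos hvP, h9]; ring
      have hwtr : wt P (Finsupp.single r 1) ≤ 3 * 3 ^ (Mbound P - (v.1.1 + v.1.2)) := by
        rw [wt_single]; split
        · rw [hr]; simp only []; rw [h3]; omega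
        · omega
      have hwtt : wt P (Finsupp.single t 1) ≤ 3 * 3 ^ (Mbound P - (v.1.1 + v.1.2)) := by
        rw [wt_single]; split
        · rw [ht]; simp only []; rw [h3']; omega
        · omega
      have hwtq : wt P (Finsupp.single q 1) ≤ 3 ^ (Mbound P - (v.1.1 + v.1.2)) := by
        rw [wt_single]; split
        · rw [hq]; simp only []; rw [h1']; omega
        · omega
      have e1 : wt P u' = wt P u'' + wt P (Finsupp.single r 1) + wt P (Finsupp.single t 1) := by
        rw [hu', wt_add, wt_add]
      have e2 : wt P (w + Finsupp.single q 1) = wt P w + wt P (Finsupp.single q 1) := wt_add _ _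
      omega
    obtain ⟨k', hk'⟩ := ih u' (w + Finsupp.single q 1) hwt' hphi'
    -- combine
    refine ⟨Finsupp.single q 1 + k', ?_⟩
    have hA := mul_minor_mem (cell_minor_mem (K := K) hvP) (u'' + k')
    rw [← hr, ← ht, ← hq] at hA
    have idx1 : u + (Finsupp.single q 1 + k')
        = u'' + k' + Finsupp.single v 1 + Finsupp.single q 1 := by rw [hu]; abel
    have idx2 : u' + k' = u'' + k' + Finsupp.single r 1 + Finsupp.single t 1 := by
      rw [hu']; abel
    have idx3 : w + Finsupp.single q 1 + k' = w + (Finsupp.single q 1 + k') := by abel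
    rw [idx2] at hk'
    have hsum2 := Ideal.add_mem _ hA hk'
    rw [sub_add_sub_cancel] at hsum2
    rw [idx1, ← idx3]
    exact hsum2
  intro n
  induction n with
  | zero =>
    intro u w hwt hphi
    refine ⟨0, ?_⟩
    have hufree : ∀ v ∈ u.support, freeVert P (v:{v : ℕ × ℕ // v ∈ verts P}).1 := by
      intro v hv
      refine ⟨v.2, ?_⟩
      intro hvP
      have h1 : 1 ≤ u v := Nat.one_le_iff_ne_zero.2 (Finsupp.mem_support_iff.1 hv)
      have : wt P u = wt P (u - Finsupp.single v 1) + wt P (Finsupp.single v 1) := by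
        rw [← wt_add]
        congr 1
        ext x
        by_cases hx : x = v
        · subst hx; simp [Finsupp.single_apply]; omega
        · simp [Finsupp.single_apply, Ne.symm hx, hx]
      rw [wt_single, if_pos hvP] at this
      have hx : 1 ≤ 3 ^ (Mbound P + 2 - (v.1.1 + v.1.2)) := Nat.one_le_pow _ _ (by norm_num)
      omega
    have hwfree : ∀ v ∈ w.support, freeVert P (v:{v : ℕ × ℕ // v ∈ verts P}).1 := by
      intro v hv
      refine ⟨v.2, ?_⟩
      intro hvP
      have h1 : 1 ≤ w v := Nat.one_le_iff_ne_zero.2 (Finsupp.mem_support_iff.1 hv)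
      have : wt P w = wt P (w - Finsupp.single v 1) + wt P (Finsupp.single v 1) := by
        rw [← wt_add]
        congr 1
        ext x
        by_cases hx : x = v
        · subst hx; simp [Finsupp.single_apply]; omega
        · simp [Finsupp.single_apply, Ne.symm hx, hx]
      rw [wt_single, if_pos hvP] at this
      have hx : 1 ≤ 3 ^ (Mbound P + 2 - (v.1.1 + v.1.2)) := Nat.one_le_pow _ _ (by norm_num)
      omega
    rw [phi_inj_free u w hufree hwfree hphi]
    simp
  | succ n ih =>
    intro u w hwt hphi
    by_cases hcase : ∃ v ∈ u.support, (v:{v : ℕ × ℕ // v ∈ verts P}).1 ∈ P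
    · obtain ⟨v, hv, hvP⟩ := hcase
      exact step n ih u w hwt hphi v hv hvP
    · by_cases hcase2 : ∃ v ∈ w.support, (v:{v : ℕ × ℕ // v ∈ verts P}).1 ∈ P
      · obtain ⟨v, hv, hvP⟩ := hcase2
        obtain ⟨k, hk⟩ := step n ih w u (by omega) hphi.symm v hv hvP
        exact ⟨k, by
          have := neg_mem hk
          rwa [neg_sub] at this⟩
      · -- both supports free
        push_neg at hcase hcase2
        refine ⟨0, ?_⟩
        have hufree : ∀ v ∈ u.support, freeVert P (v:{v : ℕ × ℕ // v ∈ verts P}).1 :=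
          fun v hv => ⟨v.2, hcase v hv⟩
        have hwfree : ∀ v ∈ w.support, freeVert P (v:{v : ℕ × ℕ // v ∈ verts P}).1 :=
          fun v hv => ⟨v.2, hcase2 v hv⟩
        rw [phi_inj_free u w hufree hwfree hphi]
        simp

end

section
variable {K : Type*} [Field K] {P : Finset Cell}
  {ψ : MvPolynomial {v : ℕ × ℕ // v ∈ verts P} K →ₐ[K] LaurentRing K P}

open MvPolynomial

lemma psi_poly (hψ : psiSpec K P ψ) (f : MvPolynomial {v : ℕ × ℕ // v ∈ verts P} K) :
    ψ f = ∑ u ∈ f.support, AddMonoidAlgebra.single (phi P u) (coeff u f) := by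
  conv_lhs => rw [f.as_sum]
  rw [map_sum]
  apply Finset.sum_congr rfl
  intro u _
  have h1 : (monomial u (coeff u f) : MvPolynomial {v : ℕ × ℕ // v ∈ verts P} K)
      = coeff u f • monomial u 1 := by
    rw [MvPolynomial.smul_monomial, smul_eq_mul, mul_one]
  rw [h1, map_smul, psi_monomial hψ, AddMonoidAlgebra.smul_single', mul_one]

lemma ker_le_innerIdeal (hψ : psiSpec K P ψ) (hP : (innerIdeal K P).IsPrime) :
    RingHom.ker ψ.toRingHom ≤ innerIdeal K P := by
  classical
  suffices H : ∀ n (f : MvPolynomial {v : ℕ × ℕ // v ∈ verts P} K),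
      f.support.card ≤ n → ψ f = 0 → f ∈ innerIdeal K P by
    intro f hf
    exact H _ f le_rfl (by simpa [RingHom.mem_ker] using hf)
  intro n
  induction n with
  | zero =>
    intro f hcard _
    have : f.support = ∅ := Finset.card_eq_zero.1 (Nat.le_zero.1 hcard)
    have hf0 : f = 0 := MvPolynomial.support_eq_empty.1 this
    rw [hf0]; exact Ideal.zero_mem _
  | succ n ih =>
    intro f hcard hf
    by_cases h0 : f = 0
    · rw [h0]; exact Ideal.zero_mem _
    obtain ⟨u₀, hu₀⟩ := MvPolynomial.support_nonempty.2 h0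
    have hc₀ : coeff u₀ f ≠ 0 := MvPolynomial.mem_support_iff.1 hu₀
    -- evaluate ψ f at phi u₀
    have heval : (0:K) = ∑ u ∈ f.support,
        (if phi P u = phi P u₀ then coeff u f else 0) := by
      have h1 : (ψ f).coeff (phi P u₀) = 0 := by rw [hf]; rfl
      rw [psi_poly hψ, AddMonoidAlgebra.coeff_sum, Finset.sum_apply'] at h1
      calc (0:K) = ∑ u ∈ f.support,
          (AddMonoidAlgebra.single (phi P u) (coeff u f)).coeff (phi P u₀) := h1.symm
        _ = _ := Finset.sum_congr rfl fun u _ => Finsupp.single_apply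
    -- find a second monomial with the same phi value
    have hex : ∃ w ∈ f.support, w ≠ u₀ ∧ phi P w = phi P u₀ := by
      by_contra hno
      push_neg at hno
      have : ∑ u ∈ f.support, (if phi P u = phi P u₀ then coeff u f else 0)
          = coeff u₀ f := by
        rw [Finset.sum_eq_single u₀]
        · rw [if_pos rfl]
        · intro u hu hne
          rw [if_neg (hno u hu hne)]
        · intro h; exact absurd hu₀ h
      rw [this] at heval
      exact hc₀ heval.symm
    obtain ⟨w, hw, hwne, hwphi⟩ := hex
    -- the binomial is in the ideal
    obtain ⟨k, hk⟩ := monC (K := K) u₀ w hwphi.symm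
    have hfactor : (monomial (u₀ + k) (1:K) - monomial (w + k) 1)
        = monomial k 1 * (monomial u₀ 1 - monomial w 1) := by
      rw [mul_sub, monomial_mul, monomial_mul, one_mul]
      rw [add_comm k u₀, add_comm k w]
    rw [hfactor] at hk
    have hD : (monomial u₀ (1:K) - monomial w 1) ∈ innerIdeal K P := by
      rcases hP.mem_or_mem hk with hcase | hcase
      · exfalso
        have := innerIdeal_le_ker hψ hcase
        rw [RingHom.mem_ker] at this
        exact psi_monomial_ne_zero hψ k this
      · exact hcase
    -- reduce f
    set f' : MvPolynomial {v : ℕ × ℕ // v ∈ verts P} K :=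
      f - coeff u₀ f • (monomial u₀ 1 - monomial w 1) with hf'
    have hpsif' : ψ f' = 0 := by
      rw [hf', map_sub, map_smul, map_sub, psi_monomial hψ, psi_monomial hψ, hwphi,
        sub_self, smul_zero, hf, sub_zero]
    have hsupp : f'.support ⊆ f.support.erase u₀ := by
      intro x hx
      have hx' : coeff x f' ≠ 0 := MvPolynomial.mem_support_iff.1 hx
      have hcx : coeff x f' = coeff x f - coeff u₀ f *
          ((if u₀ = x then (1:K) else 0) - (if w = x then 1 else 0)) := by
        rw [hf', MvPolynomial.coeff_sub, MvPolynomial.coeff_smul, MvPolynomial.coeff_sub,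
          MvPolynomial.coeff_monomial, MvPolynomial.coeff_monomial, smul_eq_mul]
      have hxu : x ≠ u₀ := by
        intro hxe
        subst hxe
        rw [if_pos rfl, if_neg hwne] at hcx
        simp at hcx
        exact hx' hcx
      rw [Finset.mem_erase]
      refine ⟨hxu, ?_⟩
      rw [MvPolynomial.mem_support_iff]
      intro hcf
      by_cases hxw : x = w
      · subst hxw
        exact (MvPolynomial.mem_support_iff.1 hw) hcf
      · rw [hcf, if_neg (fun h => hxu h.symm), if_neg (fun h => hxw h.symm)] at hcx
        simp at hcx
        exact hx' hcx
    have hcard' : f'.support.card ≤ n := by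
      have h1 := Finset.card_le_card hsupp
      have h2 : (f.support.erase u₀).card = f.support.card - 1 :=
        Finset.card_erase_of_mem hu₀
      omega
    have hf'mem := ih f' hcard' hpsif'
    have : f = f' + coeff u₀ f • (monomial u₀ 1 - monomial w 1) := by
      rw [hf']; ring
    rw [this]
    apply Ideal.add_mem _ hf'mem
    rw [MvPolynomial.smul_eq_C_mul]
    exact Ideal.mul_mem_left _ _ hD

end

/-- `I_P` is a prime ideal if and only if `I_P = L_P = ker ψ`. -/
theorem innerIdeal_prime_iff_eq_LP (K : Type*) [Field K] (P : Finset Cell)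
    (ψ : MvPolynomial {v : ℕ × ℕ // v ∈ verts P} K →ₐ[K] LaurentRing K P)
    (hψ : psiSpec K P ψ) :
    (innerIdeal K P).IsPrime ↔ innerIdeal K P = RingHom.ker ψ.toRingHom := by
  constructor
  · intro hP
    exact le_antisymm (innerIdeal_le_ker hψ) (ker_le_innerIdeal hψ hP)
  · intro h
    rw [h]
    haveI : IsDomain (LaurentRing K P) := NoZeroDivisors.to_isDomain _
    exact RingHom.ker_isPrime ψ.toRingHom
end
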